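/- arXiv:2504.17184 — 8 statements merged into one kernel-verified Lean document; each statement's English description precedes it below -/
import Mathlib

section
/- For every prime p ≥ 5 and every integer r ≥ 1, the p-adic valuation of the double factorial (2r+1)!! is at most r-1. -/
open Nat

theorem stmt_2 (p r : ℕ) (hp : p.Prime) (hp5 : 5 ≤ p) (hr : 1 ≤ r) :
    padicValNat p (Nat.doubleFactorial (2 * r + 1)) ≤ r - 1 := by
  haveI : Fact p.Prime := ⟨hp⟩
  have hfac : (2 * r + 1)! = (2 * r + 1)‼ * (2 * r)‼ :=
    Nat.factorial_eq_mul_doubleFactorial (2 * r)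
  have hmul : padicValNat p ((2 * r + 1)!) =
      padicValNat p ((2 * r + 1)‼) + padicValNat p ((2 * r)‼) := by
    rw [hfac, padicValNat.mul (Nat.doubleFactorial_pos _).ne' (Nat.doubleFactorial_pos _).ne']
  have hleg := sub_one_mul_padicValNat_factorial (p := p) (2 * r + 1)
  have h1 : (p - 1) * padicValNat p ((2 * r + 1)!) ≤ 2 * r + 1 := by omega
  set v := padicValNat p ((2 * r + 1)‼) with hv
  set w := padicValNat p ((2 * r)‼) with hw
  have h2 : 4 * v ≤ (p - 1) * (v + w) := by
    calc 4 * v ≤ 4 * (v + w) := by omega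
    _ ≤ (p - 1) * (v + w) := Nat.mul_le_mul_right _ (by omega)
  rw [hmul] at h1
  omega
end

section
/- Let n ≥ 1 and d be positive integers, set h = d + 2n + 2, and for 1 ≤ r ≤ n define u_r = C(n,r) · h(h+2)(h+4)···(h+2r-2) / (1·3·5···(2r+1)). If β/γ (with β, γ coprime integers, γ > 0) is a rational root of the monic polynomial S(X) = X^n + Σ_{r=1}^{n} (-1)^r u_r X^{n-r}, then γ ∈ {1, 3}; i.e., the root can be written k/3 for some integer k. -/
/-- The double factorial of an odd number is odd. -/
lemma odd_doubleFactorial_odd (k : ℕ) : Odd (Nat.doubleFactorial (2 * k + 1)) := by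
  induction k with
  | zero => simp [Nat.doubleFactorial]
  | succ k ih =>
      have h : 2 * (k + 1) + 1 = (2 * k + 1) + 2 := by ring
      rw [h, Nat.doubleFactorial_add_two]
      have h2 : Odd ((2 * k + 1) + 2) := ⟨k + 1, by ring⟩
      exact h2.mul ih

/-- The double factorial `(2r+1)‼` divides `(2r+1)!`. -/
lemma doubleFactorial_dvd_factorial (r : ℕ) :
    Nat.doubleFactorial (2 * r + 1) ∣ Nat.factorial (2 * r + 1) :=
  ⟨Nat.doubleFactorial (2 * r), Nat.factorial_eq_mul_doubleFactorial (2 * r)⟩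

lemma padicValNat_dfact_le (p r : ℕ) [Fact p.Prime] :
    padicValNat p (Nat.doubleFactorial (2 * r + 1)) ≤
      padicValNat p (Nat.factorial (2 * r + 1)) :=
  (padicValNat_dvd_iff_le (Nat.factorial_ne_zero _)).mp
    (dvd_trans pow_padicValNat_dvd (doubleFactorial_dvd_factorial r))

/-- Legendre-type bound. -/
lemma legendre_bound (p r : ℕ) [hp : Fact p.Prime] :
    (p - 1) * padicValNat p (Nat.factorial (2 * r + 1)) ≤ 2 * r + 1 := by
  rw [sub_one_mul_padicValNat_factorial (p := p) (2 * r + 1)]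
  exact Nat.sub_le _ _

/-- Key contradiction lemma: if `p` divides the denominator of `q` and the
`p`-adic valuation of every `(2r+1)‼` is small, we get a contradiction. -/
lemma key_lemma (n d : ℕ) (hn : 1 ≤ n) (q : ℚ)
    (hroot : q ^ n + ∑ r ∈ Finset.Icc 1 n, (-1 : ℚ) ^ r *
      ((n.choose r : ℚ) * (∏ i ∈ Finset.range r, ((d : ℚ) + 2 * n + 2 + 2 * i)) /
        (Nat.doubleFactorial (2 * r + 1) : ℚ)) * q ^ (n - r) = 0)
    (p : ℕ) (hp : p.Prime) (hpd : p ∣ q.den)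
    (H : ∀ r, 1 ≤ r → r ≤ n →
      padicValNat p (Nat.doubleFactorial (2 * r + 1)) < r * padicValNat p q.den) :
    False := by
  haveI : Fact p.Prime := ⟨hp⟩
  have hden1 : q.den ≠ 1 := by
    intro h; rw [h] at hpd; exact hp.one_lt.ne' (Nat.eq_one_of_dvd_one hpd)
  have hq0 : q ≠ 0 := by
    intro h; subst h; exact hden1 rfl
  set v : ℕ := padicValNat p q.den with hv
  have hv1 : 1 ≤ v := one_le_padicValNat_of_dvd q.pos.ne' hpd
  have hnum : ¬ (p : ℤ) ∣ q.num := by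
    intro hdvd
    have h1 : p ∣ q.num.natAbs := by
      have := Int.natAbs_dvd_natAbs.mpr hdvd
      simpa using this
    have h2 : p ∣ Nat.gcd q.num.natAbs q.den := Nat.dvd_gcd h1 hpd
    rw [q.reduced] at h2
    exact hp.one_lt.ne' (Nat.eq_one_of_dvd_one h2)
  have hqv : padicValRat p q = -(v : ℤ) := by
    rw [padicValRat_def, padicValInt.eq_zero_of_not_dvd hnum]
    simp [hv]
  have hb : (1 : ℚ) < p := by exact_mod_cast hp.one_lt
  have hqn : padicValRat p (q ^ n) = -((n : ℤ) * v) := by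
    rw [padicValRat.pow q, hqv]; ring
  have hterm : ∀ r ∈ Finset.Icc 1 n,
      padicNorm p ((-1 : ℚ) ^ r *
        ((n.choose r : ℚ) * (∏ i ∈ Finset.range r, ((d : ℚ) + 2 * n + 2 + 2 * i)) /
          (Nat.doubleFactorial (2 * r + 1) : ℚ)) * q ^ (n - r)) < padicNorm p (q ^ n) := by
    intro r hr
    obtain ⟨hr1, hrn⟩ := Finset.mem_Icc.mp hr
    set B : ℕ := Nat.doubleFactorial (2 * r + 1) with hB
    set A : ℕ := n.choose r * ∏ i ∈ Finset.range r, (d + 2 * n + 2 + 2 * i) with hA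
    have hAcast : (n.choose r : ℚ) * (∏ i ∈ Finset.range r, ((d : ℚ) + 2 * n + 2 + 2 * i))
        = (A : ℚ) := by
      rw [hA]; push_cast; ring
    have hA0 : A ≠ 0 := by
      rw [hA]
      apply Nat.mul_ne_zero (Nat.choose_pos hrn).ne'
      exact Finset.prod_ne_zero_iff.mpr fun i _ => by positivity
    have hB0 : B ≠ 0 := (Nat.doubleFactorial_pos _).ne'
    have hu0 : ((A : ℚ) / (B : ℚ)) ≠ 0 :=
      div_ne_zero (by exact_mod_cast hA0) (by exact_mod_cast hB0)
    have hm1 : ((-1 : ℚ) ^ r) ≠ 0 := pow_ne_zero _ (by norm_num)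
    have hneg1 : padicValRat p (-1 : ℚ) = 0 := by
      rw [show (-1 : ℚ) = -(1 : ℚ) from rfl, padicValRat.neg, padicValRat.one]
    have hval : padicValRat p ((-1 : ℚ) ^ r * ((A : ℚ) / (B : ℚ)) * q ^ (n - r))
        = padicValRat p ((A : ℚ) / (B : ℚ)) + ((n - r : ℕ) : ℤ) * padicValRat p q := by
      rw [padicValRat.mul (mul_ne_zero hm1 hu0) (pow_ne_zero _ hq0),
          padicValRat.mul hm1 hu0, padicValRat.pow (-1 : ℚ),
          padicValRat.pow q, hneg1]
      ring
    have hval_u : padicValRat p ((A : ℚ) / (B : ℚ))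
        = (padicValNat p A : ℤ) - (padicValNat p B : ℤ) := by
      rw [padicValRat.div (by exact_mod_cast hA0) (by exact_mod_cast hB0),
          padicValRat.of_nat, padicValRat.of_nat]
    have hvalB : (padicValNat p B : ℤ) < (r : ℤ) * (v : ℤ) := by exact_mod_cast H r hr1 hrn
    have hineq : padicValRat p (q ^ n)
        < padicValRat p ((-1 : ℚ) ^ r * ((A : ℚ) / (B : ℚ)) * q ^ (n - r)) := by
      rw [hqn, hval, hval_u, hqv]
      have h2 : ((n - r : ℕ) : ℤ) = (n : ℤ) - (r : ℤ) := by
        push_cast [Nat.cast_sub hrn]; ring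
      have h3 : (0 : ℤ) ≤ (padicValNat p A : ℤ) := Int.natCast_nonneg _
      rw [h2]
      nlinarith [hvalB, h3]
    have hterm0 : ((-1 : ℚ) ^ r * ((A : ℚ) / (B : ℚ)) * q ^ (n - r)) ≠ 0 :=
      mul_ne_zero (mul_ne_zero hm1 hu0) (pow_ne_zero _ hq0)
    rw [hAcast, padicNorm.eq_zpow_of_nonzero hterm0,
        padicNorm.eq_zpow_of_nonzero (pow_ne_zero _ hq0)]
    exact zpow_lt_zpow_right₀ hb (neg_lt_neg hineq)
  have hsum : (∑ r ∈ Finset.Icc 1 n, (-1 : ℚ) ^ r *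
      ((n.choose r : ℚ) * (∏ i ∈ Finset.range r, ((d : ℚ) + 2 * n + 2 + 2 * i)) /
        (Nat.doubleFactorial (2 * r + 1) : ℚ)) * q ^ (n - r)) = -(q ^ n) := by
    linarith [hroot]
  have hlt := padicNorm.sum_lt (p := p)
    ⟨1, Finset.mem_Icc.mpr ⟨le_refl 1, hn⟩⟩ hterm
  rw [hsum, padicNorm.neg] at hlt
  exact lt_irrefl _ hlt

/-- If `β/γ` (in lowest terms) is a rational root of
`X^n + ∑_{r=1}^n (-1)^r u_r X^{n-r}` with
`u_r = C(n,r) · h(h+2)⋯(h+2r-2) / (2r+1)‼` and `h = d + 2n + 2`,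
then the denominator is `1` or `3`, i.e. the root is `k/3` for some integer `k`. -/
theorem stmt_5 (n d : ℕ) (hn : 1 ≤ n) (hd : 1 ≤ d) (q : ℚ)
    (hroot : q ^ n + ∑ r ∈ Finset.Icc 1 n, (-1 : ℚ) ^ r *
      ((n.choose r : ℚ) * (∏ i ∈ Finset.range r, ((d : ℚ) + 2 * n + 2 + 2 * i)) /
        (Nat.doubleFactorial (2 * r + 1) : ℚ)) * q ^ (n - r) = 0) :
    q.den = 1 ∨ q.den = 3 := by
  by_contra hcon
  push_neg at hcon
  obtain ⟨h1, h3⟩ := hcon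
  have hden0 : q.den ≠ 0 := q.pos.ne'
  by_cases hex : ∃ p, p.Prime ∧ p ∣ q.den ∧ p ≠ 3
  · obtain ⟨p, hp, hpd, hp3⟩ := hex
    haveI : Fact p.Prime := ⟨hp⟩
    refine key_lemma n d hn q hroot p hp hpd ?_
    intro r hr1 hrn
    have hv1 : 1 ≤ padicValNat p q.den := one_le_padicValNat_of_dvd q.pos.ne' hpd
    have hrv : r * 1 ≤ r * padicValNat p q.den := Nat.mul_le_mul_left r hv1
    rcases eq_or_ne p 2 with rfl | hp2
    · have hodd := odd_doubleFactorial_odd r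
      have h0 : padicValNat 2 (Nat.doubleFactorial (2 * r + 1)) = 0 :=
        padicValNat.eq_zero_of_not_dvd (by
          intro hdvd
          rcases hodd with ⟨m, hm⟩
          omega)
      rw [h0]
      set w := r * padicValNat 2 q.den
      omega
    · have hp5 : 5 ≤ p := by
        have h2 := hp.two_le
        have h4 : p ≠ 4 := by intro h; rw [h] at hp; norm_num at hp
        omega
      have hle := padicValNat_dfact_le p r
      have hleg := legendre_bound p r
      have h4le : 4 * padicValNat p (Nat.factorial (2 * r + 1)) ≤ 2 * r + 1 :=
        le_trans (Nat.mul_le_mul_right _ (by omega)) hleg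
      set w := r * padicValNat p q.den
      omega
  · push_neg at hex
    have hm := Nat.minFac_prime h1
    have hmf := hex _ hm (Nat.minFac_dvd _)
    have h3d : (3 : ℕ) ∣ q.den := hmf ▸ Nat.minFac_dvd _
    have hform := Nat.eq_prime_pow_of_unique_prime_dvd hden0
      (fun {d'} hd' hdd' => hex d' hd' hdd')
    set k := q.den.primeFactorsList.length with hk
    have hk2 : 2 ≤ k := by
      by_contra hklt
      push_neg at hklt
      interval_cases k
      · simp at hform; exact h1 hform
      · simp at hform; exact h3 hform
    have h9 : (3 : ℕ) ^ 2 ∣ q.den := by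
      rw [hform]; exact pow_dvd_pow 3 hk2
    haveI : Fact (Nat.Prime 3) := ⟨by norm_num⟩
    refine key_lemma n d hn q hroot 3 (by norm_num) h3d ?_
    intro r hr1 hrn
    have hv2 : 2 ≤ padicValNat 3 q.den := (padicValNat_dvd_iff_le hden0).mp h9
    have hle := padicValNat_dfact_le 3 r
    have hleg := legendre_bound 3 r
    have h2le : 2 * padicValNat 3 (Nat.factorial (2 * r + 1)) ≤ 2 * r + 1 := by
      simpa using hleg
    have h2r : r * 2 ≤ r * padicValNat 3 q.den := Nat.mul_le_mul_left r hv2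
    set w := r * padicValNat 3 q.den
    omega
end

section
/- Let d = 2k with k ≥ 2, and for n ≥ 1 define u_n = (d+2n)(d+2n+2)···(d+4n-2) / (1·3·5···(2n-1)). Then u_n = 2^{2n + ⌊(k-1)/2⌋} · [(2n+1)(2n+3)···(2n+2⌊k/2⌋-1)] / [(n+⌊(k-1)/2⌋+1)(n+⌊(k-1)/2⌋+2)···(n+⌊(k-1)/2⌋+⌊k/2⌋)]. -/
open Finset Nat

lemma prod_range_asc (c m : ℕ) : ∏ i ∈ Finset.range m, (c + 1 + i) = (c+1).ascFactorial m := by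
  induction m with
  | zero => simp
  | succ m ih => rw [Finset.prod_range_succ, ih, Nat.ascFactorial_succ]; ring

lemma ascQ (c m : ℕ) : ∏ i ∈ Finset.range m, ((c : ℚ) + 1 + i) = ((c + m)! : ℚ) / (c ! : ℚ) := by
  rw [eq_div_iff (by exact_mod_cast c.factorial_ne_zero)]
  have h := Nat.factorial_mul_ascFactorial c m
  have hc : (((c+1).ascFactorial m : ℕ) : ℚ) = ∏ i ∈ Finset.range m, ((c:ℚ)+1+i) := by
    rw [← prod_range_asc]; push_cast; rfl
  rw [← hc]
  exact_mod_cast (mul_comm (c !) _ ▸ h)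

lemma dfacQ (j : ℕ) : ((2*j+1)‼ : ℚ) = ((2*j+2)! : ℚ) / (2^(j+1) * (j+1)!) := by
  have h1 : (2*j+2)! = (2*j+2)‼ * (2*j+1)‼ := by
    have := Nat.factorial_eq_mul_doubleFactorial (2*j+1)
    simpa using this
  have h2 : (2*j+2)‼ = 2^(j+1)*(j+1)! := by
    have := Nat.doubleFactorial_two_mul (j+1)
    rw [show 2*(j+1) = 2*j+2 by ring] at this
    exact this
  rw [eq_div_iff (by positivity)]
  rw [h2] at h1
  push_cast [h1]
  ring

lemma oddprod (p m : ℕ) : (2*p+1)‼ * ∏ i ∈ Finset.range m, (2*(p+1)+2*i+1) = (2*(p+m)+1)‼ := by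
  rw [Nat.doubleFactorial_eq_prod_odd (p+m), Finset.prod_range_add,
    ← Nat.doubleFactorial_eq_prod_odd p]
  congr 1
  apply Finset.prod_congr rfl
  intro i _
  ring

lemma oddprodQ (p m : ℕ) :
    (∏ i ∈ Finset.range m, (2 * ((p+1 : ℕ) : ℚ) + 2 * (i : ℚ) + 1)) =
      ((2*(p+m)+1)‼ : ℚ) / ((2*p+1)‼ : ℚ) := by
  rw [eq_div_iff (by positivity)]
  have h := oddprod p m
  have hc : ((∏ i ∈ Finset.range m, (2*(p+1)+2*i+1) : ℕ) : ℚ)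
      = ∏ i ∈ Finset.range m, (2 * ((p+1 : ℕ) : ℚ) + 2 * (i : ℚ) + 1) := by
    push_cast; rfl
  rw [← hc, mul_comm]
  exact_mod_cast h

/-- For `d = 2k`, `k ≥ 2`, the constant term
`u_n = (d+2n)(d+2n+2)⋯(d+4n-2)/(1·3⋯(2n-1))` equals
`2^{2n+⌊(k-1)/2⌋} · (2n+1)(2n+3)⋯(2n+2⌊k/2⌋-1) /
  ((n+⌊(k-1)/2⌋+1)⋯(n+⌊(k-1)/2⌋+⌊k/2⌋))`. -/
theorem stmt_6 (k n : ℕ) (hk : 2 ≤ k) (hn : 1 ≤ n) :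
    (∏ i ∈ Finset.range n, ((2 * k : ℚ) + 2 * n + 2 * i)) /
      (Nat.doubleFactorial (2 * n - 1) : ℚ) =
    2 ^ (2 * n + (k - 1) / 2) *
      (∏ i ∈ Finset.range (k / 2), ((2 * n : ℚ) + 2 * i + 1)) /
      (∏ i ∈ Finset.range (k / 2), ((n : ℚ) + (((k - 1) / 2 : ℕ) : ℚ) + 1 + i)) := by
  obtain ⟨p, rfl⟩ : ∃ p, n = p + 1 := ⟨n - 1, by omega⟩
  have hD : ((2*p+1)‼ : ℚ) = ((2*p+2)! : ℚ) / (2^(p+1) * (p+1)!) := dfacQ p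
  rcases Nat.even_or_odd k with he | ho
  · obtain ⟨m, rfl⟩ := he
    obtain ⟨a, rfl⟩ : ∃ a, m = a + 1 := ⟨m - 1, by omega⟩
    rw [show (a+1+(a+1))/2 = a+1 by omega, show (a+1+(a+1)-1)/2 = a by omega,
        show 2*(p+1)-1 = 2*p+1 by omega]
    have hA : (∏ i ∈ Finset.range (p+1),
        (2 * ((a+1+(a+1) : ℕ) : ℚ) + 2 * ((p+1 : ℕ) : ℚ) + 2 * (i : ℚ)))
        = 2^(p+1) * (((2*(a+p+1)+1)! : ℚ) / ((2*a+p+2)! : ℚ)) := by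
      rw [show ∏ i ∈ Finset.range (p+1),
          (2 * ((a+1+(a+1) : ℕ) : ℚ) + 2 * ((p+1 : ℕ) : ℚ) + 2 * (i : ℚ))
          = ∏ i ∈ Finset.range (p+1), (2 * (((2*a+p+2 : ℕ) : ℚ) + 1 + (i : ℚ)))
          from Finset.prod_congr rfl (fun i _ => by push_cast; ring),
        Finset.prod_mul_distrib, Finset.prod_const, Finset.card_range, ascQ,
        show 2*a+p+2+(p+1) = 2*(a+p+1)+1 by ring]
    have hC : (∏ i ∈ Finset.range (a+1),
        (((p+1 : ℕ) : ℚ) + (a : ℚ) + 1 + (i : ℚ)))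
        = ((2*a+p+2)! : ℚ) / ((p+a+1)! : ℚ) := by
      rw [show ∏ i ∈ Finset.range (a+1), (((p+1 : ℕ) : ℚ) + (a : ℚ) + 1 + (i : ℚ))
          = ∏ i ∈ Finset.range (a+1), (((p+a+1 : ℕ) : ℚ) + 1 + (i : ℚ))
          from Finset.prod_congr rfl (fun i _ => by push_cast; ring),
        ascQ, show p+a+1+(a+1) = 2*a+p+2 by ring]
    have hB := oddprodQ p (a+1)
    rw [show p + (a+1) = a+p+1 by ring] at hB
    have hB2 : ((2*(a+p+1)+1)‼ : ℚ)
        = ((2*(a+p+1)+2)! : ℚ) / (2^(a+p+2) * ((a+p+2)!)) := by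
      have := dfacQ (a+p+1)
      rwa [show a+p+1+1 = a+p+2 by ring] at this
    have hs1 : ((2*(a+p+1)+2)! : ℚ) = (2*(a+p+1)+2) * ((2*(a+p+1)+1)! : ℚ) := by
      exact_mod_cast congrArg (Nat.cast (R := ℚ)) (Nat.factorial_succ (2*(a+p+1)+1))
    have hs2 : ((a+p+2)! : ℚ) = (a+p+2) * ((p+a+1)! : ℚ) := by
      have := Nat.factorial_succ (p+a+1)
      rw [show p+a+1+1 = a+p+2 by ring] at this
      exact_mod_cast congrArg (Nat.cast (R := ℚ)) this
    rw [hA, hC, hB, hB2, hD, hs1, hs2]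
    have h1 : ((2*(a+p+1)+1)! : ℚ) ≠ 0 := by exact_mod_cast Nat.factorial_ne_zero _
    have h2 : ((2*a+p+2)! : ℚ) ≠ 0 := by exact_mod_cast Nat.factorial_ne_zero _
    have h3 : ((p+a+1)! : ℚ) ≠ 0 := by exact_mod_cast Nat.factorial_ne_zero _
    have h4 : ((2*p+2)! : ℚ) ≠ 0 := by exact_mod_cast Nat.factorial_ne_zero _
    have h5 : ((p+1)! : ℚ) ≠ 0 := by exact_mod_cast Nat.factorial_ne_zero _
    field_simp
    ring
  · obtain ⟨a, rfl⟩ := ho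
    have ha : 1 ≤ a := by omega
    rw [show (2*a+1)/2 = a by omega, show (2*a+1-1)/2 = a by omega,
        show 2*(p+1)-1 = 2*p+1 by omega]
    have hA : (∏ i ∈ Finset.range (p+1),
        (2 * ((2*a+1 : ℕ) : ℚ) + 2 * ((p+1 : ℕ) : ℚ) + 2 * (i : ℚ)))
        = 2^(p+1) * (((2*(a+p+1))! : ℚ) / ((2*a+p+1)! : ℚ)) := by
      rw [show ∏ i ∈ Finset.range (p+1),
          (2 * ((2*a+1 : ℕ) : ℚ) + 2 * ((p+1 : ℕ) : ℚ) + 2 * (i : ℚ))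
          = ∏ i ∈ Finset.range (p+1), (2 * (((2*a+p+1 : ℕ) : ℚ) + 1 + (i : ℚ)))
          from Finset.prod_congr rfl (fun i _ => by push_cast; ring),
        Finset.prod_mul_distrib, Finset.prod_const, Finset.card_range, ascQ,
        show 2*a+p+1+(p+1) = 2*(a+p+1) by ring]
    have hC : (∏ i ∈ Finset.range a,
        (((p+1 : ℕ) : ℚ) + (a : ℚ) + 1 + (i : ℚ)))
        = ((2*a+p+1)! : ℚ) / ((p+a+1)! : ℚ) := by
      rw [show ∏ i ∈ Finset.range a, (((p+1 : ℕ) : ℚ) + (a : ℚ) + 1 + (i : ℚ))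
          = ∏ i ∈ Finset.range a, (((p+a+1 : ℕ) : ℚ) + 1 + (i : ℚ))
          from Finset.prod_congr rfl (fun i _ => by push_cast; ring),
        ascQ, show p+a+1+a = 2*a+p+1 by ring]
    have hB := oddprodQ p a
    have hB2 : ((2*(p+a)+1)‼ : ℚ)
        = ((2*(p+a)+2)! : ℚ) / (2^(p+a+1) * ((p+a+1)!)) := dfacQ (p+a)
    have hs1 : ((2*(p+a)+2)! : ℚ) = ((2*(a+p+1))! : ℚ) := by
      norm_num [show 2*(p+a)+2 = 2*(a+p+1) by ring]
    rw [hA, hC, hB, hB2, hD, hs1]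
    have h1 : ((2*(a+p+1))! : ℚ) ≠ 0 := by exact_mod_cast Nat.factorial_ne_zero _
    have h2 : ((2*a+p+1)! : ℚ) ≠ 0 := by exact_mod_cast Nat.factorial_ne_zero _
    have h3 : ((p+a+1)! : ℚ) ≠ 0 := by exact_mod_cast Nat.factorial_ne_zero _
    have h4 : ((2*p+2)! : ℚ) ≠ 0 := by exact_mod_cast Nat.factorial_ne_zero _
    have h5 : ((p+1)! : ℚ) ≠ 0 := by exact_mod_cast Nat.factorial_ne_zero _
    field_simp
    ring
end

section
/- Suppose n ≥ 2 and the monic integer polynomial S(X) = X^n + Σ_{r=1}^n (-1)^r u_r X^{n-r} with constant term (-1)^n u_n = (-1)^n 2^{2n} has n distinct positive integer roots. Then n ≤ 5. Moreover, no such polynomial with all u_r = C(n,r)·(2n+4)(2n+6)···(2n+2r+2)/(1·3···(2r-1)) has n distinct integer roots for any n ≥ 2. -/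
open Polynomial Finset Nat

lemma aux_monic_eq_prod {R : Type*} [CommRing R] [IsDomain R] {n : ℕ} (p : R[X])
    (hm : p.Monic) (hd : p.natDegree = n) (x : Fin n → R) (hx : Function.Injective x)
    (hr : ∀ i, p.eval (x i) = 0) : p = ∏ i, (X - C (x i)) := by
  set q : R[X] := ∏ i, (X - C (x i)) with hq
  have hqm : q.Monic := monic_prod_of_monic _ _ fun i _ => monic_X_sub_C _
  have hqd : q.natDegree = n := by
    rw [hq, natDegree_prod_of_monic _ _ fun i _ => monic_X_sub_C _]
    simp
  by_contra hne
  have hsub : p - q ≠ 0 := sub_ne_zero.mpr hne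
  have hdeg : (p - q).natDegree < n := by
    rw [natDegree_lt_iff_degree_lt hsub]
    have h1 : degree (p - q) < degree p := by
      apply degree_sub_lt
      · rw [degree_eq_natDegree hm.ne_zero, degree_eq_natDegree hqm.ne_zero, hd, hqd]
      · exact hm.ne_zero
      · rw [hm.leadingCoeff, hqm.leadingCoeff]
    rwa [degree_eq_natDegree hm.ne_zero, hd] at h1
  have hqe : ∀ i, q.eval (x i) = 0 := by
    intro i
    rw [hq, eval_prod]
    exact Finset.prod_eq_zero (Finset.mem_univ i) (by simp)
  have := eq_zero_of_natDegree_lt_card_of_eval_eq_zero (p - q) hx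
    (fun i => by simp [hr i, hqe i]) (by simpa using hdeg)
  exact hsub this

lemma aux_sum_ge : ∀ (n : ℕ) (s : Finset ℕ), s.card = n → ∑ i ∈ range n, i ≤ ∑ d ∈ s, d := by
  intro n
  induction n with
  | zero => simp
  | succ n ih =>
    intro s hs
    have hne : s.Nonempty := by rw [← Finset.card_pos, hs]; omega
    set m := s.max' hne with hm
    have hmem : m ∈ s := s.max'_mem hne
    have hnm : n ≤ m := by
      have hsub : s ⊆ Finset.range (m + 1) := by
        intro d hd
        simp only [Finset.mem_range]
        have := Finset.le_max' s d hd
        omega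
      have := Finset.card_le_card hsub
      rw [hs, Finset.card_range] at this
      omega
    have hih := ih (s.erase m) (by rw [Finset.card_erase_of_mem hmem, hs]; omega)
    have hsum : ∑ d ∈ s.erase m, d + m = ∑ d ∈ s, d := Finset.sum_erase_add s _ hmem
    rw [Finset.sum_range_succ]
    omega

lemma aux_prod_ge : ∀ (n : ℕ) (s : Finset ℤ), s.card = n → (∀ d ∈ s, 1 ≤ d) →
    (n.factorial : ℤ) ≤ ∏ d ∈ s, d := by
  intro n
  induction n with
  | zero => simp
  | succ n ih =>
    intro s hs hpos
    have hne : s.Nonempty := by rw [← Finset.card_pos, hs]; omega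
    set m := s.max' hne with hm
    have hmem : m ∈ s := s.max'_mem hne
    have hnm : (n : ℤ) + 1 ≤ m := by
      have hsub : s ⊆ Finset.Icc 1 m := fun d hd =>
        Finset.mem_Icc.mpr ⟨hpos d hd, Finset.le_max' s d hd⟩
      have h2 := Finset.card_le_card hsub
      rw [hs, Int.card_Icc] at h2
      omega
    have hih := ih (s.erase m) (by rw [Finset.card_erase_of_mem hmem, hs]; omega)
      (fun d hd => hpos d (Finset.mem_of_mem_erase hd))
    have hprod : (∏ d ∈ s.erase m, d) * m = ∏ d ∈ s, d := Finset.prod_erase_mul s _ hmem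
    have hfpos : (0:ℤ) ≤ (n.factorial : ℤ) := by positivity
    calc ((n+1).factorial : ℤ) = (n.factorial : ℤ) * (n + 1) := by
          push_cast [Nat.factorial_succ]; ring
    _ ≤ (∏ d ∈ s.erase m, d) * m :=
        mul_le_mul hih hnm (by positivity) (le_trans hfpos hih)
    _ = ∏ d ∈ s, d := hprod

lemma aux_dfact (m : ℕ) :
    (Nat.doubleFactorial (2*m+1)) * (2^(m+1) * (m+1).factorial) = (2*m+2).factorial := by
  have h1 : (2*m+2) = (2*m+1) + 1 := by ring
  have h2 := Nat.factorial_eq_mul_doubleFactorial (2*m+1)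
  have h3 : Nat.doubleFactorial (2*m+1+1) = Nat.doubleFactorial (2*(m+1)) := by ring_nf
  have h4 := Nat.doubleFactorial_two_mul (m+1)
  rw [h1, h2, h3, h4]
  ring

lemma aux_prodshift (n : ℕ) : ∀ r : ℕ,
    (∏ j ∈ range r, ((2*n : ℚ) + 4 + 2*j)) * ((n+1).factorial : ℚ)
      = 2^r * ((n+1+r).factorial : ℚ) := by
  intro r
  induction r with
  | zero => simp
  | succ r ih =>
    rw [Finset.prod_range_succ]
    have h : (n+1+(r+1)).factorial = (n+1+r+1) * (n+1+r).factorial := by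
      rw [show n+1+(r+1) = (n+1+r)+1 by ring, Nat.factorial_succ]
    rw [h]
    push_cast
    linear_combination ((2*n:ℚ)+4+2*r) * ih

lemma aux_fact_big : ∀ n : ℕ, 10 ≤ n → 2^(2*n+1) < n.factorial := by
  intro n
  induction n with
  | zero => omega
  | succ n ih =>
    intro h
    rcases Nat.lt_or_ge n 10 with h10 | h10
    · have h9 : n = 9 := by omega
      subst h9
      norm_num [Nat.factorial]
    · have := ih h10
      rw [Nat.factorial_succ]
      calc 2^(2*(n+1)+1) = 4 * 2^(2*n+1) := by ring
      _ < 4 * n.factorial := by omega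
      _ ≤ (n+1) * n.factorial := Nat.mul_le_mul_right _ (by omega)

noncomputable def uu (n : ℕ) (r : ℕ) : ℚ :=
  (n.choose r : ℚ) * (∏ j ∈ range r, ((2*n : ℚ) + 4 + 2*j)) /
    ((Nat.doubleFactorial (2*r-1) : ℕ) : ℚ)

lemma uu_nonneg (n r : ℕ) : 0 ≤ uu n r := by
  unfold uu
  have h1 : (0:ℚ) ≤ ∏ j ∈ range r, ((2*n : ℚ) + 4 + 2*j) :=
    Finset.prod_nonneg fun j _ => by positivity
  positivity

lemma uu_pos (n : ℕ) : 0 < uu n n := by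
  unfold uu
  have h1 : (0:ℚ) < ∏ j ∈ range n, ((2*n : ℚ) + 4 + 2*j) :=
    Finset.prod_pos fun j _ => by positivity
  have h2 : (0:ℚ) < ((Nat.doubleFactorial (2*n-1) : ℕ) : ℚ) := by
    exact_mod_cast Nat.doubleFactorial_pos _
  have h3 : (0:ℚ) < (n.choose n : ℚ) := by simp
  positivity

lemma aux_pos (n : ℕ) (hn : 2 ≤ n) (t : ℤ)
    (ht : (t:ℚ)^n + ∑ r ∈ Finset.Icc 1 n, (-1:ℚ)^r * uu n r * (t:ℚ)^(n-r) = 0) : 1 ≤ t := by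
  by_contra hlt
  push_neg at hlt
  rcases eq_or_lt_of_le (by omega : t ≤ 0) with h0 | hneg
  · subst h0
    rw [show ((0:ℤ):ℚ) = 0 by norm_cast] at ht
    rw [zero_pow (by omega : n ≠ 0)] at ht
    rw [Finset.sum_eq_single n (fun r hr hrn => by
      rw [zero_pow (by simp at hr; omega : n - r ≠ 0), mul_zero]) (by simp; omega)] at ht
    simp only [Nat.sub_self, pow_zero, mul_one, zero_add] at ht
    have := uu_pos n
    rcases mul_eq_zero.mp ht with h | h
    · exact pow_ne_zero n (by norm_num : (-1:ℚ) ≠ 0) h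
    · exact absurd h (ne_of_gt this)
  · set m : ℤ := -t with hmdef
    have hm1 : 1 ≤ m := by omega
    have htm : (t:ℚ) = -(m:ℚ) := by push_cast [hmdef]; ring
    rw [htm] at ht
    have hm1q : 1 ≤ (m:ℚ) := by exact_mod_cast hm1
    have hrw : ∀ r ∈ Finset.Icc 1 n, (-1:ℚ)^r * uu n r * (-(m:ℚ))^(n-r)
        = (-1:ℚ)^n * (uu n r * (m:ℚ)^(n-r)) := by
      intro r hr
      have hrn : r ≤ n := (Finset.mem_Icc.mp hr).2
      have hsign : (-1:ℚ)^r * ((-1:ℚ)^(n-r)) = (-1:ℚ)^n := by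
        rw [← pow_add]; congr 1; omega
      rw [neg_pow]
      linear_combination (uu n r * (m:ℚ)^(n-r)) * hsign
    rw [Finset.sum_congr rfl hrw, ← Finset.mul_sum, neg_pow] at ht
    have hsum : 0 ≤ ∑ r ∈ Finset.Icc 1 n, uu n r * (m:ℚ)^(n-r) :=
      Finset.sum_nonneg fun r _ => mul_nonneg (uu_nonneg n r) (by positivity)
    have hfac : (-1:ℚ)^n * ((m:ℚ)^n + ∑ r ∈ Finset.Icc 1 n, uu n r * (m:ℚ)^(n-r)) = 0 := by
      linear_combination ht
    have hpos : 0 < (m:ℚ)^n + ∑ r ∈ Finset.Icc 1 n, uu n r * (m:ℚ)^(n-r) := by positivity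
    rcases mul_eq_zero.mp hfac with h | h
    · exact pow_ne_zero n (by norm_num : (-1:ℚ) ≠ 0) h
    · exact absurd h (ne_of_gt hpos)

lemma uu_eq (n : ℕ) (hn : 2 ≤ n) : uu n n * ((n:ℚ)+1) = 2^(2*n) * (2*(n:ℚ)+1) := by
  have hD := aux_dfact (n-1)
  rw [show 2*(n-1)+1 = 2*n-1 by omega, show n-1+1 = n by omega,
      show 2*(n-1)+2 = 2*n by omega] at hD
  have hDq : ((Nat.doubleFactorial (2*n-1) : ℕ) : ℚ) * (2^n * ((n.factorial : ℕ) : ℚ))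
      = (((2*n).factorial : ℕ) : ℚ) := by exact_mod_cast hD
  have hPr := aux_prodshift n n
  rw [show n+1+n = 2*n+1 by omega] at hPr
  have hF2 : (((n+1).factorial : ℕ) : ℚ) = ((n:ℚ)+1) * ((n.factorial : ℕ) : ℚ) := by
    rw [Nat.factorial_succ]; push_cast; ring
  have hF4 : (((2*n+1).factorial : ℕ) : ℚ) = (2*(n:ℚ)+1) * (((2*n).factorial : ℕ) : ℚ) := by
    rw [Nat.factorial_succ]; push_cast; ring
  rw [hF2, hF4] at hPr
  have hDne : ((Nat.doubleFactorial (2*n-1) : ℕ) : ℚ) ≠ 0 := by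
    have := Nat.doubleFactorial_pos (2*n-1); positivity
  have hFne : ((n.factorial : ℕ) : ℚ) ≠ 0 := by
    have := Nat.factorial_pos n; positivity
  unfold uu
  rw [Nat.choose_self]
  rw [div_mul_eq_mul_div, div_eq_iff hDne]
  apply mul_right_cancel₀ hFne
  push_cast
  linear_combination hPr - 2^n*(2*(n:ℚ)+1)*hDq

lemma aux_case3 (t : ℤ) (ht1 : 1 ≤ t)
    (heq : (t:ℚ)^3 + ∑ r ∈ Finset.Icc 1 3, (-1:ℚ)^r * uu 3 r * (t:ℚ)^(3-r) = 0) : False := by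
  rw [show (Finset.Icc 1 3 : Finset ℕ) = {1, 2, 3} from rfl] at heq
  rw [show ({1,2,3} : Finset ℕ) = insert 1 (insert 2 {3}) from rfl] at heq
  rw [Finset.sum_insert (by decide), Finset.sum_insert (by decide),
    Finset.sum_singleton] at heq
  unfold uu at heq
  norm_num [Finset.prod_range_succ, Nat.doubleFactorial, Nat.choose] at heq
  have hq : ((t^3 - 30*t^2 + 120*t - 112 : ℤ) : ℚ) = 0 := by push_cast; linear_combination heq
  have hz : t^3 - 30*t^2 + 120*t - 112 = 0 := by exact_mod_cast hq
  have hub : t ≤ 30 := by nlinarith [sq_nonneg t, sq_nonneg (t - 30)]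
  have hz' : t*t*t - 30*(t*t) + 120*t - 112 = 0 := by linear_combination hz
  interval_cases t <;> omega

lemma aux_case7 (t : ℤ) (ht1 : 1 ≤ t)
    (heq : (t:ℚ)^7 + ∑ r ∈ Finset.Icc 1 7, (-1:ℚ)^r * uu 7 r * (t:ℚ)^(7-r) = 0) : False := by
  rw [show (Finset.Icc 1 7 : Finset ℕ) = {1,2,3,4,5,6,7} from rfl] at heq
  rw [show ({1,2,3,4,5,6,7} : Finset ℕ) =
    insert 1 (insert 2 (insert 3 (insert 4 (insert 5 (insert 6 ({7} : Finset ℕ)))))) from rfl] at heq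
  rw [Finset.sum_insert (by decide), Finset.sum_insert (by decide), Finset.sum_insert (by decide),
    Finset.sum_insert (by decide), Finset.sum_insert (by decide), Finset.sum_insert (by decide),
    Finset.sum_singleton] at heq
  unfold uu at heq
  norm_num [Finset.prod_range_succ, Nat.doubleFactorial, Nat.choose] at heq
  have hq : ((t^7 - 126*t^6 + 2520*t^5 - 18480*t^4 + 63360*t^3 - 109824*t^2 + 93184*t
      - 30720 : ℤ) : ℚ) = 0 := by
    push_cast; linear_combination heq
  have hz : t^7 - 126*t^6 + 2520*t^5 - 18480*t^4 + 63360*t^3 - 109824*t^2 + 93184*t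
      - 30720 = 0 := by exact_mod_cast hq
  have hub : t ≤ 126 := by
    by_contra hgt
    push_neg at hgt
    have h127 : (127:ℤ) ≤ t := by omega
    nlinarith [pow_pos (by omega : (0:ℤ) < t) 6, pow_pos (by omega : (0:ℤ) < t) 5,
      pow_pos (by omega : (0:ℤ) < t) 4, pow_pos (by omega : (0:ℤ) < t) 3,
      pow_pos (by omega : (0:ℤ) < t) 2,
      mul_le_mul_of_nonneg_left h127 (le_of_lt (pow_pos (by omega : (0:ℤ) < t) 6)),
      mul_le_mul_of_nonneg_left h127 (le_of_lt (pow_pos (by omega : (0:ℤ) < t) 4))]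
  have hz' : t*t*t*t*t*t*t - 126*(t*t*t*t*t*t) + 2520*(t*t*t*t*t) - 18480*(t*t*t*t)
      + 63360*(t*t*t) - 109824*(t*t) + 93184*t - 30720 = 0 := by linear_combination hz
  interval_cases t <;> omega

lemma aux_vieta (n : ℕ) (hn : 2 ≤ n) (x : Fin n → ℤ) (hinj : Function.Injective x)
    (hx : ∀ i, ((x i : ℚ))^n + ∑ r ∈ Finset.Icc 1 n, (-1:ℚ)^r * uu n r * ((x i : ℚ))^(n-r) = 0) :
    ((∏ i, x i : ℤ) : ℚ) = uu n n := by
  set Q : ℚ[X] := X^n + ∑ r ∈ Finset.Icc 1 n, C ((-1:ℚ)^r * uu n r) * X^(n-r) with hQdef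
  have hsumdeg : (∑ r ∈ Finset.Icc 1 n, C ((-1:ℚ)^r * uu n r) * X^(n-r)).degree
      < ((n : ℕ) : WithBot ℕ) := by
    apply lt_of_le_of_lt (degree_sum_le _ _)
    rw [Finset.sup_lt_iff (by exact_mod_cast WithBot.bot_lt_coe n)]
    intro r hr
    refine lt_of_le_of_lt (degree_C_mul_X_pow_le _ _) ?_
    exact_mod_cast (show n - r < n by simp at hr; omega)
  have hQm : Q.Monic := by
    rw [hQdef]
    exact monic_X_pow_add hsumdeg
  have hQd : Q.natDegree = n := by
    have : Q.degree = n := by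
      rw [hQdef, degree_add_eq_left_of_degree_lt (by rwa [degree_X_pow]), degree_X_pow]
    exact natDegree_eq_of_degree_eq_some this
  have hQe : ∀ i, Q.eval ((x i : ℚ)) = 0 := by
    intro i
    rw [hQdef]
    simp only [eval_add, eval_pow, eval_X, eval_finset_sum, eval_mul, eval_C]
    exact hx i
  have hxq : Function.Injective (fun i => ((x i : ℚ))) :=
    fun i j h => hinj (Int.cast_injective h)
  have hfact : Q = ∏ i, (X - C ((x i : ℚ))) :=
    aux_monic_eq_prod Q hQm hQd _ hxq hQe
  have h0 : Q.eval 0 = (-1:ℚ)^n * uu n n := by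
    rw [hQdef]
    simp only [eval_add, eval_pow, eval_X, eval_finset_sum, eval_mul, eval_C]
    rw [zero_pow (by omega : n ≠ 0), zero_add]
    rw [Finset.sum_eq_single n (fun r hr hrn => by
      rw [zero_pow (by simp at hr; omega : n - r ≠ 0), mul_zero]) (by simp; omega)]
    simp
  have h0' : Q.eval 0 = (-1:ℚ)^n * ∏ i, ((x i : ℚ)) := by
    rw [hfact, eval_prod]
    simp only [eval_sub, eval_X, eval_C, zero_sub]
    have hneg : ∀ i : Fin n, -((x i : ℚ)) = (-1) * ((x i : ℚ)) := fun i => by ring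
    rw [Finset.prod_congr rfl (fun i _ => hneg i), Finset.prod_mul_distrib,
      Finset.prod_const]
    simp
  have hcanc : uu n n = ∏ i, ((x i : ℚ)) :=
    mul_left_cancel₀ (pow_ne_zero n (by norm_num : (-1:ℚ) ≠ 0)) (by rw [← h0, ← h0'])
  rw [hcanc]
  push_cast
  ring

/-- (1) A monic integer polynomial of degree `n ≥ 2` with constant term
`(-1)^n 2^{2n}` having `n` distinct positive integer roots forces `n ≤ 5`.
(2) The polynomial `X^n + ∑ (-1)^r u_r X^{n-r}` with
`u_r = C(n,r)(2n+4)(2n+6)⋯(2n+2r+2)/(1·3⋯(2r-1))` has no `n` distinct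
integer roots. -/
theorem stmt_13 (n : ℕ) (hn : 2 ≤ n) :
    (∀ S : Polynomial ℤ, S.Monic → S.natDegree = n →
      S.coeff 0 = (-1) ^ n * 2 ^ (2 * n) →
      ∀ x : Fin n → ℤ, Function.Injective x →
        (∀ i, 0 < x i ∧ S.eval (x i) = 0) → n ≤ 5) ∧
    ¬ ∃ x : Fin n → ℤ, Function.Injective x ∧ ∀ i,
      ((x i : ℚ)) ^ n + ∑ r ∈ Finset.Icc 1 n, (-1 : ℚ) ^ r *
        ((n.choose r : ℚ) * (∏ j ∈ Finset.range r, ((2 * n : ℚ) + 4 + 2 * j)) /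
          (Nat.doubleFactorial (2 * r - 1) : ℚ)) * ((x i : ℚ)) ^ (n - r) = 0 := by
  constructor
  · -- Part 1
    intro S hm hd hc0 x hinj hx
    have hfact := aux_monic_eq_prod S hm hd x hinj (fun i => (hx i).2)
    have h0 : S.eval 0 = (-1:ℤ)^n * 2^(2*n) := by rw [← coeff_zero_eq_eval_zero, hc0]
    have h0' : S.eval 0 = (-1:ℤ)^n * ∏ i, x i := by
      rw [hfact, eval_prod]
      simp only [eval_sub, eval_X, eval_C, zero_sub]
      have hneg : ∀ i : Fin n, -(x i) = (-1) * (x i) := fun i => by ring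
      rw [Finset.prod_congr rfl (fun i _ => hneg i), Finset.prod_mul_distrib,
        Finset.prod_const]
      simp
    have hprod : ∏ i, x i = 2^(2*n) :=
      mul_left_cancel₀ (pow_ne_zero n (by norm_num : (-1:ℤ) ≠ 0)) (by rw [← h0', ← h0])
    set y : Fin n → ℕ := fun i => (x i).toNat with hy
    have hxy : ∀ i, ((y i : ℤ)) = x i := fun i => Int.toNat_of_nonneg (le_of_lt (hx i).1)
    have hyprod : ∏ i, y i = 2^(2*n) := by
      have h' : ((∏ i, y i : ℕ) : ℤ) = 2^(2*n) := by
        push_cast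
        rw [Finset.prod_congr rfl (fun i _ => hxy i), hprod]
      exact_mod_cast h'
    have hydvd : ∀ i, y i ∣ 2^(2*n) := by
      intro i
      rw [← hyprod]
      exact Finset.dvd_prod_of_mem y (Finset.mem_univ i)
    have hexp : ∀ i, ∃ k ≤ 2*n, y i = 2^k :=
      fun i => (Nat.dvd_prime_pow Nat.prime_two).mp (hydvd i)
    choose a ha1 ha2 using hexp
    have hainj : Function.Injective a := by
      intro i j hij
      apply hinj
      rw [← hxy i, ← hxy j, ha2 i, ha2 j, hij]
    have hsum : ∑ i, a i = 2*n := by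
      have h1 : ∏ i, (2:ℕ)^(a i) = 2^(∑ i, a i) := by
        rw [← Finset.prod_pow_eq_pow_sum]
      have h2 : ∏ i, (2:ℕ)^(a i) = 2^(2*n) := by
        rw [← hyprod]
        exact Finset.prod_congr rfl fun i _ => (ha2 i).symm
      exact Nat.pow_right_injective (by norm_num) (h1.symm.trans h2)
    have himg : (Finset.univ.image a).card = n := by
      rw [Finset.card_image_of_injective _ hainj, Finset.card_univ, Fintype.card_fin]
    have hsimg : ∑ d ∈ Finset.univ.image a, d = 2*n := by
      rw [Finset.sum_image (fun i _ j _ h => hainj h), hsum]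
    have hge := aux_sum_ge n (Finset.univ.image a) himg
    rw [hsimg] at hge
    have hgauss := Finset.sum_range_id_mul_two n
    have h2 : n * (n-1) ≤ 4 * n := by rw [← hgauss]; omega
    obtain ⟨m, rfl⟩ : ∃ m, n = m + 2 := ⟨n - 2, by omega⟩
    have h3 : (m+2)*(m+1) ≤ 4*(m+2) := by simpa using h2
    nlinarith [h3]
  · -- Part 2
    rintro ⟨x, hinj, hx0⟩
    have hx : ∀ i, ((x i : ℚ))^n + ∑ r ∈ Finset.Icc 1 n, (-1:ℚ)^r * uu n r
        * ((x i : ℚ))^(n-r) = 0 := hx0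
    have hpos : ∀ i, 1 ≤ x i := fun i => aux_pos n hn (x i) (hx i)
    have hv := aux_vieta n hn x hinj hx
    have huq := uu_eq n hn
    have hZq : ((∏ i, x i : ℤ) : ℚ) * ((n:ℚ)+1) = 2^(2*n) * (2*(n:ℚ)+1) := by
      rw [hv]; exact huq
    have hZ : (∏ i, x i) * ((n:ℤ)+1) = 2^(2*n) * (2*(n:ℤ)+1) := by
      exact_mod_cast hZq
    have hprodpos : 0 < ∏ i, x i := Finset.prod_pos fun i _ => lt_of_lt_of_le zero_lt_one (hpos i)
    set P : ℕ := (∏ i, x i).toNat with hP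
    have hPZ : ((P : ℤ)) = ∏ i, x i := Int.toNat_of_nonneg (by omega)
    have hN : P * (n+1) = 2^(2*n) * (2*n+1) := by
      have h' : ((P * (n+1) : ℕ) : ℤ) = ((2^(2*n) * (2*n+1) : ℕ) : ℤ) := by
        push_cast
        rw [hPZ]
        push_cast at hZ
        linarith [hZ]
      exact_mod_cast h'
    have hcop : Nat.Coprime (n+1) (2*n+1) := by
      have hg1 : Nat.gcd (n+1) (2*n+1) ∣ 2*(n+1) := Dvd.dvd.mul_left (Nat.gcd_dvd_left _ _) 2
      have hg2 : Nat.gcd (n+1) (2*n+1) ∣ 2*n+1 := Nat.gcd_dvd_right _ _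
      have hg3 : Nat.gcd (n+1) (2*n+1) ∣ 1 := by
        have := Nat.dvd_sub hg1 hg2
        rwa [show 2*(n+1) - (2*n+1) = 1 by omega] at this
      exact Nat.dvd_one.mp hg3
    have hdvd : (n+1) ∣ 2^(2*n) := by
      apply hcop.dvd_of_dvd_mul_right
      exact ⟨P, by rw [← hN]; ring⟩
    obtain ⟨k, hk2n, hk⟩ := (Nat.dvd_prime_pow Nat.prime_two).mp hdvd
    have hn9 : n ≤ 9 := by
      by_contra h10
      push_neg at h10
      have h10' : 10 ≤ n := by omega
      -- n! ≤ P
      have himg : (Finset.univ.image x).card = n := by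
        rw [Finset.card_image_of_injective _ hinj, Finset.card_univ, Fintype.card_fin]
      have hprodimg : ∏ d ∈ Finset.univ.image x, d = ∏ i, x i :=
        Finset.prod_image (fun i _ j _ h => hinj h)
      have hge := aux_prod_ge n (Finset.univ.image x) himg
        (fun d hd => by
          obtain ⟨i, _, rfl⟩ := Finset.mem_image.mp hd
          exact hpos i)
      rw [hprodimg, ← hPZ] at hge
      have hfle : n.factorial ≤ P := by exact_mod_cast hge
      have hPle : P ≤ 2^(2*n+1) := by
        have h1 : P * (n+1) ≤ 2^(2*n+1) * (n+1) := by
          rw [hN, pow_succ]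
          nlinarith [pow_pos (by norm_num : 0 < 2) (2*n)]
        exact Nat.le_of_mul_le_mul_right h1 (by omega)
      have := aux_fact_big n h10'
      omega
    have hk3 : k ≤ 3 := by
      by_contra hk4
      push_neg at hk4
      have : 2^4 ≤ 2^k := Nat.pow_le_pow_right (by norm_num) (by omega)
      omega
    have hn37 : n = 3 ∨ n = 7 := by
      interval_cases k <;> omega
    rcases hn37 with rfl | rfl
    · exact aux_case3 (x 0) (hpos 0) (hx 0)
    · exact aux_case7 (x 0) (hpos 0) (hx 0)
end

section
/- For n ≥ 1, the quantity u_n = 2^{2n}(2n+1)/(n+1) is an integer if and only if n = 2^ℓ - 1 for some integer ℓ ≥ 1. -/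
/-- For `n ≥ 1`, `u_n = 2^{2n}(2n+1)/(n+1)` is an integer iff `n = 2^ℓ - 1`
for some `ℓ ≥ 1`. -/
theorem stmt_15 (n : ℕ) (hn : 1 ≤ n) :
    (∃ m : ℤ, (2 : ℚ) ^ (2 * n) * (2 * n + 1) / ((n : ℚ) + 1) = (m : ℚ)) ↔
      ∃ ℓ : ℕ, 1 ≤ ℓ ∧ n = 2 ^ ℓ - 1 := by
  constructor
  · rintro ⟨m, hm⟩
    have hne : ((n : ℚ) + 1) ≠ 0 := by positivity
    rw [div_eq_iff hne] at hm
    have h2 : ((n : ℤ) + 1) ∣ 2 ^ (2 * n) * (2 * n + 1) := by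
      refine ⟨m, ?_⟩
      have : ((2 ^ (2 * n) * (2 * n + 1) : ℤ) : ℚ) = (((n : ℤ) + 1) * m : ℤ) := by
        push_cast
        linarith [hm]
      exact_mod_cast this
    have hcop : IsCoprime ((n : ℤ) + 1) ((2 : ℤ) * n + 1) := ⟨2, -1, by ring⟩
    have h3 : ((n : ℤ) + 1) ∣ 2 ^ (2 * n) := by
      have := hcop.dvd_of_dvd_mul_right (by rw [mul_comm] at h2 ⊢; exact h2)
      exact this
    have h4 : (n + 1) ∣ 2 ^ (2 * n) := by
      have : ((n + 1 : ℕ) : ℤ) ∣ ((2 ^ (2 * n) : ℕ) : ℤ) := by push_cast; exact h3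
      exact_mod_cast this
    obtain ⟨i, hi, heq⟩ := (Nat.dvd_prime_pow Nat.prime_two).1 h4
    have hi1 : 1 ≤ i := by
      rcases Nat.eq_zero_or_pos i with h | h
      · simp [h] at heq; omega
      · exact h
    exact ⟨i, hi1, by omega⟩
  · rintro ⟨ℓ, hℓ, hn2⟩
    have hpow : 1 ≤ 2 ^ ℓ := Nat.one_le_two_pow
    have hn1 : n + 1 = 2 ^ ℓ := by omega
    have hℓ2n : ℓ ≤ 2 * n := by
      have := Nat.lt_two_pow_self (n := ℓ)
      omega
    refine ⟨2 ^ (2 * n - ℓ) * (2 * n + 1), ?_⟩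
    have hne : ((n : ℚ) + 1) ≠ 0 := by positivity
    rw [div_eq_iff hne]
    have hq : ((n : ℚ) + 1) = 2 ^ ℓ := by exact_mod_cast congrArg (Nat.cast : ℕ → ℚ) hn1
    rw [hq]
    push_cast
    have hp : (2:ℚ)^(2*n) = 2^(2*n-ℓ) * 2^ℓ := by
      rw [← pow_add]; congr 1; omega
    rw [hp]; ring
end

section
/- The integer solutions (x, y) with x, y > 0 of the Pell-type equation x² - 6y² = 9 are exactly the pairs obtained from 3(5+2√6)^ℓ = x + y√6 for ℓ ≥ 0; consequently, the positive integers d for which 6(d+1)(d+2) is a perfect square are exactly d = ((5+2√6)^ℓ + (5-2√6)^ℓ - 6)/4 for integers ℓ ≥ 1. -/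
open Real

private def pell6 : ℕ → ℤ × ℤ
  | 0 => (1, 0)
  | n + 1 => (5 * (pell6 n).1 + 12 * (pell6 n).2, 2 * (pell6 n).1 + 5 * (pell6 n).2)

private lemma pell6_norm (n : ℕ) : (pell6 n).1 ^ 2 - 6 * (pell6 n).2 ^ 2 = 1 := by
  induction n with
  | zero => simp [pell6]
  | succ n ih => simp only [pell6]; ring_nf; ring_nf at ih; linarith

private lemma pell6_pos (n : ℕ) : 0 < (pell6 n).1 ∧ 0 ≤ (pell6 n).2 := by
  induction n with
  | zero => simp [pell6]
  | succ n ih => simp only [pell6]; constructor <;> nlinarith [ih.1, ih.2]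

private lemma sqrt6_sq : Real.sqrt 6 * Real.sqrt 6 = 6 :=
  Real.mul_self_sqrt (by norm_num)

private lemma irr6 : Irrational (Real.sqrt 6) := by
  rw [show (6:ℝ) = ((6:ℕ):ℝ) by norm_num, irrational_sqrt_natCast_iff]
  rintro ⟨r, hr⟩
  have : r ≤ 6 := by nlinarith
  interval_cases r <;> omega

private lemma pell6_real (n : ℕ) :
    ((pell6 n).1 : ℝ) + (pell6 n).2 * Real.sqrt 6 = (5 + 2 * Real.sqrt 6) ^ n := by
  induction n with
  | zero => simp [pell6]
  | succ n ih =>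
    rw [pow_succ, ← ih]
    simp only [pell6]
    push_cast
    ring_nf
    rw [Real.sq_sqrt (by norm_num : (6:ℝ) ≥ 0)]
    ring

private lemma pell6_real_conj (n : ℕ) :
    ((pell6 n).1 : ℝ) - (pell6 n).2 * Real.sqrt 6 = (5 - 2 * Real.sqrt 6) ^ n := by
  induction n with
  | zero => simp [pell6]
  | succ n ih =>
    rw [pow_succ, ← ih]
    simp only [pell6]
    push_cast
    ring_nf
    rw [Real.sq_sqrt (by norm_num : (6:ℝ) ≥ 0)]
    ring

/-- Uniqueness of representation p + q√6 with p q integers. -/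
private lemma sqrt6_unique {p q r s : ℤ}
    (h : (p : ℝ) + q * Real.sqrt 6 = r + s * Real.sqrt 6) : p = r ∧ q = s := by
  by_cases hqs : q = s
  · refine ⟨?_, hqs⟩
    subst hqs
    have : (p : ℝ) = r := by linarith
    exact_mod_cast this
  · exfalso
    apply irr6
    have hne : ((s : ℝ) - q) ≠ 0 := by
      intro h0
      apply hqs
      have : (q : ℝ) = s := by linarith
      exact_mod_cast this
    refine ⟨(p - r) / (s - q), ?_⟩
    push_cast
    field_simp
    linarith

/-- Classification of positive solutions of u² - 6v² = 1. -/
private lemma pell_classify : ∀ n : ℕ, ∀ u v : ℤ, v.natAbs = n → 0 < u → 0 ≤ v →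
    u ^ 2 - 6 * v ^ 2 = 1 → ∃ ℓ, u = (pell6 ℓ).1 ∧ v = (pell6 ℓ).2 := by
  intro n
  induction n using Nat.strong_induction_on with
  | _ n ih =>
    intro u v hn hu hv heq
    rcases eq_or_lt_of_le hv with h0 | h0
    · -- v = 0
      refine ⟨0, ?_, by simp [pell6, ← h0]⟩
      have : u ^ 2 = 1 := by rw [← h0] at heq; linarith
      have : (u - 1) * (u + 1) = 0 := by ring_nf; linarith
      rcases mul_eq_zero.mp this with h | h
      · simp [pell6]; omega
      · omega
    · -- v ≥ 1
      have hv1 : 1 ≤ v := h0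
      have hvne1 : v ≠ 1 := by
        intro h1
        subst h1
        -- u² = 7, impossible
        have : u ^ 2 = 7 := by linarith
        rcases le_or_gt u 2 with h | h
        · nlinarith
        · nlinarith
      have hv2 : 2 ≤ v := by omega
      set u' := 5 * u - 12 * v with hu'def
      set v' := 5 * v - 2 * u with hv'def
      have h2vu : 2 * v < u := by nlinarith
      have hu' : 0 < u' := by nlinarith
      have hv' : 0 ≤ v' := by nlinarith
      have hlt : v' < v := by nlinarith
      have heq' : u' ^ 2 - 6 * v' ^ 2 = 1 := by rw [hu'def, hv'def]; ring_nf; linarith [heq]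
      obtain ⟨ℓ, h1, h2⟩ := ih v'.natAbs (by omega) u' v' rfl hu' hv' heq'
      refine ⟨ℓ + 1, ?_, ?_⟩ <;> simp only [pell6, ← h1, ← h2] <;> omega

private lemma part1 (x y : ℤ) (hx : 0 < x) (hy : 0 < y) :
    x ^ 2 - 6 * y ^ 2 = 9 ↔
      ∃ ℓ : ℕ, (x : ℝ) + (y : ℝ) * Real.sqrt 6 = 3 * (5 + 2 * Real.sqrt 6) ^ ℓ := by
  constructor
  · intro heq
    -- 3 ∣ x
    have h3x : (3 : ℤ) ∣ x := by
      have : (3 : ℤ) ∣ x ^ 2 := ⟨2 * y ^ 2 + 3, by linarith⟩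
      exact Int.prime_three.dvd_of_dvd_pow this
    obtain ⟨u, rfl⟩ := h3x
    have h3y : (3 : ℤ) ∣ y := by
      have h1 : (3 : ℤ) ∣ y ^ 2 := by
        have h2 : (3 : ℤ) ∣ 2 * y ^ 2 := ⟨u ^ 2 - 1, by linarith⟩
        exact (Int.prime_three.dvd_mul.mp h2).resolve_left (by norm_num)
      exact Int.prime_three.dvd_of_dvd_pow h1
    obtain ⟨v, rfl⟩ := h3y
    have hu : 0 < u := by linarith
    have hv : 0 < v := by linarith
    have huv : u ^ 2 - 6 * v ^ 2 = 1 := by nlinarith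
    obtain ⟨ℓ, h1, h2⟩ := pell_classify v.natAbs u v rfl hu (le_of_lt hv) huv
    refine ⟨ℓ, ?_⟩
    rw [← pell6_real, ← h1, ← h2]
    push_cast
    ring
  · rintro ⟨ℓ, h⟩
    have key : ((x : ℝ)) + y * Real.sqrt 6 = (3 * (pell6 ℓ).1 : ℤ) + (3 * (pell6 ℓ).2 : ℤ) * Real.sqrt 6 := by
      rw [h, ← pell6_real]; push_cast; ring
    obtain ⟨hx3, hy3⟩ := sqrt6_unique key
    have := pell6_norm ℓ
    rw [hx3, hy3]
    nlinarith [pell6_norm ℓ]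

/-- The positive solutions of `x² - 6y² = 9` come from `3(5+2√6)^ℓ`, and
consequently `6(d+1)(d+2)` is a perfect square exactly when
`d = ((5+2√6)^ℓ + (5-2√6)^ℓ - 6)/4` for some `ℓ ≥ 1`. -/
theorem stmt_16 :
    (∀ x y : ℤ, 0 < x → 0 < y →
      (x ^ 2 - 6 * y ^ 2 = 9 ↔
        ∃ ℓ : ℕ, (x : ℝ) + (y : ℝ) * Real.sqrt 6 = 3 * (5 + 2 * Real.sqrt 6) ^ ℓ)) ∧
    (∀ d : ℕ, 0 < d →
      ((∃ y : ℕ, 6 * (d + 1) * (d + 2) = y ^ 2) ↔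
        ∃ ℓ : ℕ, 1 ≤ ℓ ∧ (d : ℝ) =
          ((5 + 2 * Real.sqrt 6) ^ ℓ + (5 - 2 * Real.sqrt 6) ^ ℓ - 6) / 4)) := by
  refine ⟨part1, ?_⟩
  intro d hd
  constructor
  · rintro ⟨y, hy⟩
    have hy0 : 0 < y := by nlinarith
    have hx : (0 : ℤ) < 6 * (d : ℤ) + 9 := by positivity
    have hyZ : (0 : ℤ) < (y : ℤ) := by exact_mod_cast hy0
    have heqZ : (6 * (d : ℤ) + 9) ^ 2 - 6 * (y : ℤ) ^ 2 = 9 := by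
      have : (6 * ((d : ℤ) + 1) * ((d : ℤ) + 2) : ℤ) = (y : ℤ) ^ 2 := by exact_mod_cast hy
      nlinarith
    obtain ⟨ℓ, hℓ⟩ := (part1 _ _ hx hyZ).mp heqZ
    have key : ((6 * (d : ℤ) + 9 : ℤ) : ℝ) + ((y : ℤ) : ℝ) * Real.sqrt 6
        = ((3 * (pell6 ℓ).1 : ℤ) : ℝ) + ((3 * (pell6 ℓ).2 : ℤ) : ℝ) * Real.sqrt 6 := by
      rw [hℓ, ← pell6_real]; push_cast; ring
    obtain ⟨h1, h2⟩ := sqrt6_unique key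
    have ha : (pell6 ℓ).1 = 2 * (d : ℤ) + 3 := by omega
    have hℓ1 : 1 ≤ ℓ := by
      rcases Nat.eq_zero_or_pos ℓ with h | h
      · exfalso; rw [h] at ha; simp [pell6] at ha; omega
      · exact h
    refine ⟨ℓ, hℓ1, ?_⟩
    rw [← pell6_real, ← pell6_real_conj]
    have : (((pell6 ℓ).1 : ℤ) : ℝ) = 2 * (d : ℝ) + 3 := by rw [ha]; push_cast; ring
    rw [show ((pell6 ℓ).1 : ℝ) + (pell6 ℓ).2 * Real.sqrt 6 + ((pell6 ℓ).1 - (pell6 ℓ).2 * Real.sqrt 6)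
        = 2 * ((pell6 ℓ).1 : ℝ) by ring]
    rw [this]; ring
  · rintro ⟨ℓ, hℓ1, hd2⟩
    rw [← pell6_real, ← pell6_real_conj] at hd2
    have haR : (d : ℝ) = (2 * ((pell6 ℓ).1 : ℝ) - 6) / 4 := by rw [hd2]; ring_nf
    have haZ : 4 * (d : ℤ) = 2 * (pell6 ℓ).1 - 6 := by
      have : 4 * (d : ℝ) = 2 * ((pell6 ℓ).1 : ℝ) - 6 := by rw [haR]; ring
      exact_mod_cast this
    have hb : 0 ≤ (pell6 ℓ).2 := (pell6_pos ℓ).2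
    refine ⟨(3 * (pell6 ℓ).2).toNat, ?_⟩
    have hnorm := pell6_norm ℓ
    have : (6 * ((d : ℤ) + 1) * ((d : ℤ) + 2) : ℤ) = (3 * (pell6 ℓ).2) ^ 2 := by nlinarith
    zify [Int.toNat_of_nonneg (by omega : (0:ℤ) ≤ 3 * (pell6 ℓ).2)]
    linarith [this]
end

section
/- A positive integer d satisfies that 10(d+1)(d+4) is a perfect square if and only if 2d+5 = (u + ū)/2 where u ranges over 3(19+6√10)^{ℓ₁} (ℓ₁ ≥ 1), (7+2√10)(19+6√10)^{ℓ₂} (ℓ₂ ≥ 0), or (7-2√10)(19+6√10)^{ℓ₃} (ℓ₃ ≥ 0); equivalently the solutions of x̃² - 10ỹ² = 9 with x̃ = 2d+5 are exactly the associates of 3, 7+2√10, and 7-2√10 under multiplication by powers of 19+6√10. -/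
open Real

private def step (p : ℤ × ℤ) : ℤ × ℤ := (19 * p.1 + 60 * p.2, 6 * p.1 + 19 * p.2)

private lemma sol_iter (a b : ℤ) (h : a ^ 2 - 10 * b ^ 2 = 9) (ℓ : ℕ) :
    (step^[ℓ] (a, b)).1 ^ 2 - 10 * (step^[ℓ] (a, b)).2 ^ 2 = 9 := by
  induction ℓ with
  | zero => simpa using h
  | succ n ih =>
    rw [Function.iterate_succ_apply']
    simp only [step]
    linear_combination ih

private lemma rep_pair (a b : ℤ) (ℓ : ℕ) :
    (((step^[ℓ] (a, b)).1 : ℝ) + ((step^[ℓ] (a, b)).2 : ℝ) * Real.sqrt 10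
      = ((a : ℝ) + b * Real.sqrt 10) * (19 + 6 * Real.sqrt 10) ^ ℓ) ∧
    (((step^[ℓ] (a, b)).1 : ℝ) - ((step^[ℓ] (a, b)).2 : ℝ) * Real.sqrt 10
      = ((a : ℝ) - b * Real.sqrt 10) * (19 - 6 * Real.sqrt 10) ^ ℓ) := by
  have h10 : Real.sqrt 10 * Real.sqrt 10 = 10 := Real.mul_self_sqrt (by norm_num)
  induction ℓ with
  | zero => simp
  | succ n ih =>
    obtain ⟨h1, h2⟩ := ih
    rw [Function.iterate_succ_apply']
    constructor
    · simp only [step]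
      push_cast
      rw [pow_succ]
      linear_combination (19 + 6 * Real.sqrt 10) * h1 - (6 * ((step^[n] (a, b)).2 : ℝ)) * h10
    · simp only [step]
      push_cast
      rw [pow_succ]
      linear_combination (19 - 6 * Real.sqrt 10) * h2 - (6 * ((step^[n] (a, b)).2 : ℝ)) * h10

private lemma rep (a b : ℤ) (ℓ : ℕ) :
    ((step^[ℓ] (a, b)).1 : ℝ)
      = (((a : ℝ) + b * Real.sqrt 10) * (19 + 6 * Real.sqrt 10) ^ ℓ
        + ((a : ℝ) - b * Real.sqrt 10) * (19 - 6 * Real.sqrt 10) ^ ℓ) / 2 := by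
  obtain ⟨h1, h2⟩ := rep_pair a b ℓ
  linarith

private lemma small_cases : ∀ z : Fin 18, ∀ x : Fin 54, (x : ℕ) ^ 2 = 10 * (z : ℕ) ^ 2 + 9 →
    ((x : ℕ) = 3 ∧ (z : ℕ) = 0) ∨ ((x : ℕ) = 7 ∧ (z : ℕ) = 2) ∨ ((x : ℕ) = 13 ∧ (z : ℕ) = 4) := by
  decide

private lemma classify : ∀ z : ℕ, ∀ x : ℤ, 0 < x → x ^ 2 = 10 * (z : ℤ) ^ 2 + 9 →
    ∃ ℓ : ℕ, (x, (z : ℤ)) = step^[ℓ] (3, 0) ∨ (x, (z : ℤ)) = step^[ℓ] (7, 2) ∨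
      (x, (z : ℤ)) = step^[ℓ] (13, 4) := by
  intro z
  induction z using Nat.strong_induction_on with
  | _ z ih =>
    intro x hx hsol
    by_cases hz : z ≤ 17
    · -- small case
      have hz' : (z : ℤ) ≤ 17 := by exact_mod_cast hz
      have hxle : x ≤ 53 := by nlinarith
      lift x to ℕ using hx.le with n hn
      have hsol' : n ^ 2 = 10 * z ^ 2 + 9 := by exact_mod_cast hsol
      have hnle : n < 54 := by omega
      rcases small_cases ⟨z, by omega⟩ ⟨n, hnle⟩ hsol' with ⟨h1, h2⟩ | ⟨h1, h2⟩ | ⟨h1, h2⟩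
      · exact ⟨0, Or.inl (by subst h1 h2; norm_num)⟩
      · exact ⟨0, Or.inr (Or.inl (by subst h1 h2; norm_num))⟩
      · exact ⟨0, Or.inr (Or.inr (by subst h1 h2; norm_num))⟩
    · push_neg at hz
      have hz18 : (18 : ℤ) ≤ (z : ℤ) := by exact_mod_cast hz
      set x' : ℤ := 19 * x - 60 * (z : ℤ) with hx'def
      set z' : ℤ := 19 * (z : ℤ) - 6 * x with hz'def
      have hsol' : x' ^ 2 = 10 * z' ^ 2 + 9 := by
        rw [hx'def, hz'def]; linear_combination hsol
      have hxpos : 0 < x' := by nlinarith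
      have hznn : 0 ≤ z' := by nlinarith
      have hzlt : z' < (z : ℤ) := by nlinarith
      have htn : (z'.toNat : ℤ) = z' := Int.toNat_of_nonneg hznn
      have hltn : z'.toNat < z := by omega
      obtain ⟨ℓ, hc⟩ := ih z'.toNat hltn x' hxpos (by rw [htn]; exact hsol')
      rw [htn] at hc
      have hstep : step (x', z') = (x, (z : ℤ)) := by
        simp only [step, hx'def, hz'def, Prod.mk.injEq]
        exact ⟨by ring, by ring⟩
      refine ⟨ℓ + 1, ?_⟩
      rcases hc with h | h | h
      · exact Or.inl (by rw [Function.iterate_succ_apply', ← h, hstep])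
      · exact Or.inr (Or.inl (by rw [Function.iterate_succ_apply', ← h, hstep]))
      · exact Or.inr (Or.inr (by rw [Function.iterate_succ_apply', ← h, hstep]))

private lemma back (a b : ℤ) (hsol : a ^ 2 - 10 * b ^ 2 = 9) (ℓ : ℕ) (d : ℕ)
    (h : 2 * (d : ℝ) + 5 = (((a : ℝ) + b * Real.sqrt 10) * (19 + 6 * Real.sqrt 10) ^ ℓ
      + ((a : ℝ) - b * Real.sqrt 10) * (19 - 6 * Real.sqrt 10) ^ ℓ) / 2) :
    ∃ y : ℕ, 10 * (d + 1) * (d + 4) = y ^ 2 := by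
  have hx : ((step^[ℓ] (a, b)).1 : ℝ) = 2 * (d : ℝ) + 5 := by rw [rep]; exact h.symm
  have hx' : (step^[ℓ] (a, b)).1 = 2 * (d : ℤ) + 5 := by exact_mod_cast hx
  have hs := sol_iter a b hsol ℓ
  rw [hx'] at hs
  set m : ℤ := (step^[ℓ] (a, b)).2 with hm
  refine ⟨5 * m.natAbs, ?_⟩
  have key : (10 : ℚ) * ((d : ℚ) + 1) * ((d : ℚ) + 4) = (5 * (m.natAbs : ℚ)) ^ 2 := by
    have hs' : (2 * (d : ℚ) + 5) ^ 2 - 10 * (m : ℚ) ^ 2 = 9 := by exact_mod_cast hs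
    have hnn' : ((m.natAbs : ℚ)) ^ 2 = (m : ℚ) ^ 2 := by
      push_cast [Nat.cast_natAbs]
      exact sq_abs _
    linear_combination (5 / 2 : ℚ) * hs' - 25 * hnn'
  exact_mod_cast key

/-- `10(d+1)(d+4)` is a perfect square iff `2d+5 = (u + ū)/2` where `u` is
`3(19+6√10)^{ℓ₁}` (`ℓ₁ ≥ 1`), `(7+2√10)(19+6√10)^{ℓ₂}` (`ℓ₂ ≥ 0`), or
`(7-2√10)(19+6√10)^{ℓ₃}` (`ℓ₃ ≥ 0`). -/
theorem stmt_17 (d : ℕ) (hd : 0 < d) :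
    (∃ y : ℕ, 10 * (d + 1) * (d + 4) = y ^ 2) ↔
      ((∃ ℓ : ℕ, 1 ≤ ℓ ∧ (2 * (d : ℝ) + 5) =
          (3 * (19 + 6 * Real.sqrt 10) ^ ℓ + 3 * (19 - 6 * Real.sqrt 10) ^ ℓ) / 2) ∨
       (∃ ℓ : ℕ, (2 * (d : ℝ) + 5) =
          ((7 + 2 * Real.sqrt 10) * (19 + 6 * Real.sqrt 10) ^ ℓ +
           (7 - 2 * Real.sqrt 10) * (19 - 6 * Real.sqrt 10) ^ ℓ) / 2) ∨
       (∃ ℓ : ℕ, (2 * (d : ℝ) + 5) =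
          ((7 - 2 * Real.sqrt 10) * (19 + 6 * Real.sqrt 10) ^ ℓ +
           (7 + 2 * Real.sqrt 10) * (19 - 6 * Real.sqrt 10) ^ ℓ) / 2)) := by
  constructor
  · rintro ⟨y, hy⟩
    have h5 : 5 ∣ y := by
      have hdvd : 5 ∣ y ^ 2 := ⟨2 * (d + 1) * (d + 4), by rw [← hy]; ring⟩
      exact (Nat.Prime.dvd_of_dvd_pow (by norm_num) hdvd)
    obtain ⟨w, rfl⟩ := h5
    have h25 : 10 * (d + 1) * (d + 4) = 25 * w ^ 2 := by rw [hy]; ring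
    have hw : 5 * (2 * ((d + 1) * (d + 4))) = 5 * (5 * w ^ 2) := by linarith
    have hw2 : 2 * ((d + 1) * (d + 4)) = 5 * w ^ 2 :=
      Nat.eq_of_mul_eq_mul_left (by norm_num) hw
    have hwz : 2 * (((d : ℤ) + 1) * ((d : ℤ) + 4)) = 5 * (w : ℤ) ^ 2 := by exact_mod_cast hw2
    have hx : (2 * (d : ℤ) + 5) ^ 2 = 10 * (w : ℤ) ^ 2 + 9 := by linear_combination 2 * hwz
    obtain ⟨ℓ, hc⟩ := classify w (2 * (d : ℤ) + 5) (by positivity) hx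
    rcases hc with h | h | h
    · -- base (3,0)
      cases ℓ with
      | zero =>
        exfalso
        simp only [Function.iterate_zero_apply, Prod.mk.injEq] at h
        omega
      | succ k =>
        left
        refine ⟨k + 1, Nat.succ_le_succ (Nat.zero_le k), ?_⟩
        have hx1 : ((step^[k + 1] ((3 : ℤ), (0 : ℤ))).1 : ℝ) = 2 * (d : ℝ) + 5 := by
          exact_mod_cast congrArg (fun p : ℤ × ℤ => ((p.1 : ℝ))) h.symm
        rw [rep] at hx1
        rw [← hx1]
        push_cast
        ring
    · right; left
      refine ⟨ℓ, ?_⟩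
      have hx1 : ((step^[ℓ] ((7 : ℤ), (2 : ℤ))).1 : ℝ) = 2 * (d : ℝ) + 5 := by
        exact_mod_cast congrArg (fun p : ℤ × ℤ => ((p.1 : ℝ))) h.symm
      rw [rep] at hx1
      rw [← hx1]
      push_cast
      ring
    · right; right
      refine ⟨ℓ + 1, ?_⟩
      have hbase : step ((7 : ℤ), (-2 : ℤ)) = ((13 : ℤ), (4 : ℤ)) := by
        simp only [step]; norm_num
      have hiter : step^[ℓ + 1] ((7 : ℤ), (-2 : ℤ)) = step^[ℓ] ((13 : ℤ), (4 : ℤ)) := by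
        rw [Function.iterate_succ_apply, hbase]
      have hx1 : ((step^[ℓ + 1] ((7 : ℤ), (-2 : ℤ))).1 : ℝ) = 2 * (d : ℝ) + 5 := by
        rw [hiter]
        exact_mod_cast congrArg (fun p : ℤ × ℤ => ((p.1 : ℝ))) h.symm
      rw [rep] at hx1
      rw [← hx1]
      push_cast
      ring
  · rintro (⟨ℓ, _, h⟩ | ⟨ℓ, h⟩ | ⟨ℓ, h⟩)
    · exact back 3 0 (by norm_num) ℓ d (by rw [h]; push_cast; ring)
    · exact back 7 2 (by norm_num) ℓ d (by rw [h]; push_cast; ring)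
    · exact back 7 (-2) (by norm_num) ℓ d (by rw [h]; push_cast; ring)
end

section
/- Let n = 2^ℓ - 1 with ℓ ≥ 2, and for 1 ≤ r ≤ n define u_r = 2^r · C(n,r) · (n+2)(n+3)···(n+r+1) / (1·3···(2r-1)), assumed to be integers. Then the 2-adic valuations satisfy ord₂(u₁) = 1, ord₂(u₂) = 3, ord₂(u₃) = 4, and ord₂(u_r) ≥ r + ⌊r/2⌋ for all r ≥ 1; consequently the Newton polygon of X^n + Σ_{r=1}^n (-1)^r u_r X^{n-r} at the prime 2 has an edge of slope 3/2, so this polynomial has no factorization into linear polynomials over ℤ (it has a non-integer root). -/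
open Polynomial

lemma aux_pv_prod {ι : Type*} [DecidableEq ι] (s : Finset ι) (f : ι → ℕ)
    (h : ∀ i ∈ s, f i ≠ 0) :
    padicValNat 2 (∏ i ∈ s, f i) = ∑ i ∈ s, padicValNat 2 (f i) := by
  induction s using Finset.induction with
  | empty => simp
  | @insert a s hx ih =>
    rw [Finset.prod_insert hx, Finset.sum_insert hx,
      padicValNat.mul (h a (Finset.mem_insert_self a s))
        (Finset.prod_ne_zero_iff.mpr fun i hi => h i (Finset.mem_insert_of_mem hi)),
      ih fun i hi => h i (Finset.mem_insert_of_mem hi)]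

lemma aux_pv_pow_mul_odd {v m : ℕ} (hm : ¬ 2 ∣ m) : padicValNat 2 (2 ^ v * m) = v := by
  have hm0 : m ≠ 0 := by rintro rfl; simp at hm
  rw [padicValNat.mul (pow_ne_zero _ two_ne_zero) hm0, padicValNat.prime_pow,
    padicValNat.eq_zero_of_not_dvd hm, add_zero]

lemma aux_pv_two_pow_add {l k : ℕ} (h0 : 0 < k) (h1 : k < 2 ^ l) :
    padicValNat 2 (2 ^ l + k) = padicValNat 2 k := by
  set v := padicValNat 2 k with hv
  have hdvd : 2 ^ v ∣ k := pow_padicValNat_dvd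
  have hndvd : ¬ 2 ^ (v + 1) ∣ k := pow_succ_padicValNat_not_dvd h0.ne'
  obtain ⟨m, hm⟩ := hdvd
  have hmodd : ¬ 2 ∣ m := by
    rintro ⟨c, hc⟩
    exact hndvd ⟨c, by rw [hm, hc]; ring⟩
  have hvl : v < l := by
    have h2 : 2 ^ v ≤ k := Nat.le_of_dvd h0 ⟨m, hm⟩
    have := lt_of_le_of_lt h2 h1
    exact (Nat.pow_lt_pow_iff_right (le_refl 2)).mp this
  have key : 2 ^ l + k = 2 ^ v * (2 ^ (l - v) + m) := by
    rw [hm, mul_add, ← pow_add]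
    congr 2
    omega
  rw [key, aux_pv_pow_mul_odd]
  intro hdvd2
  have h2p : (2 : ℕ) ∣ 2 ^ (l - v) := dvd_pow_self 2 (by omega)
  exact hmodd ((Nat.dvd_add_right h2p).mp hdvd2)

lemma aux_pv_two_pow_sub {l k : ℕ} (h0 : 0 < k) (h1 : k < 2 ^ l) :
    padicValNat 2 (2 ^ l - k) = padicValNat 2 k := by
  set v := padicValNat 2 k with hv
  have hdvd : 2 ^ v ∣ k := pow_padicValNat_dvd
  have hndvd : ¬ 2 ^ (v + 1) ∣ k := pow_succ_padicValNat_not_dvd h0.ne'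
  obtain ⟨m, hm⟩ := hdvd
  have hmodd : ¬ 2 ∣ m := by
    rintro ⟨c, hc⟩
    exact hndvd ⟨c, by rw [hm, hc]; ring⟩
  have hvl : v < l := by
    have h2 : 2 ^ v ≤ k := Nat.le_of_dvd h0 ⟨m, hm⟩
    exact (Nat.pow_lt_pow_iff_right (le_refl 2)).mp (lt_of_le_of_lt h2 h1)
  have hmlt : m < 2 ^ (l - v) := by
    by_contra h
    push_neg at h
    have : 2 ^ v * 2 ^ (l - v) ≤ 2 ^ v * m := Nat.mul_le_mul_left _ h
    rw [← pow_add] at this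
    have hlv : v + (l - v) = l := by omega
    rw [hlv, ← hm] at this
    omega
  have key : 2 ^ l - k = 2 ^ v * (2 ^ (l - v) - m) := by
    rw [hm, Nat.mul_sub, ← pow_add]
    congr 2
    omega
  rw [key, aux_pv_pow_mul_odd]
  have h2p : (2 : ℕ) ∣ 2 ^ (l - v) := dvd_pow_self 2 (by omega)
  intro hdvd2
  omega

lemma aux_odd_dF (k : ℕ) : ¬ 2 ∣ Nat.doubleFactorial (2 * k + 1) := by
  induction k with
  | zero => decide
  | succ k ih =>
    have h : 2 * (k + 1) + 1 = (2 * k + 1) + 2 := by ring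
    rw [h, Nat.doubleFactorial_add_two]
    intro hdvd
    rcases (Nat.Prime.dvd_mul Nat.prime_two).mp hdvd with h' | h'
    · omega
    · exact ih h'

lemma aux_half_le_pv_factorial (r : ℕ) : r / 2 ≤ padicValNat 2 (Nat.factorial r) := by
  rcases Nat.eq_zero_or_pos r with hr | hr
  · simp [hr]
  have hb : Nat.log 2 r < r + 1 := lt_of_le_of_lt (Nat.log_le_self 2 r) (Nat.lt_succ_self r)
  rw [padicValNat_factorial hb]
  have h1 : (1 : ℕ) ∈ Finset.Ico 1 (r + 1) := by
    simp [Finset.mem_Ico]; omega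
  calc r / 2 = r / 2 ^ 1 := by norm_num
    _ ≤ ∑ i ∈ Finset.Ico 1 (r + 1), r / 2 ^ i :=
      Finset.single_le_sum (f := fun i => r / 2 ^ i) (fun i _ => Nat.zero_le _) h1



/-- For `n = 2^ℓ - 1` (`ℓ ≥ 2`) and the integer coefficients
`u_r = 2^r C(n,r)(n+2)(n+3)⋯(n+r+1)/(1·3⋯(2r-1))`, one has
`ord₂(u₁) = 1`, `ord₂(u₂) = 3`, `ord₂(u₃) = 4`, and `ord₂(u_r) ≥ r + ⌊r/2⌋`;
consequently `X^n + ∑_{r=1}^n (-1)^r u_r X^{n-r}` does not factor into linear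
polynomials over `ℤ`. -/
theorem stmt_19 (ℓ n : ℕ) (hℓ : 2 ≤ ℓ) (hn : n = 2 ^ ℓ - 1)
    (u : ℕ → ℤ)
    (hu : ∀ r : ℕ, 1 ≤ r → r ≤ n →
      (u r : ℚ) = 2 ^ r * (n.choose r : ℚ) *
        (∏ j ∈ Finset.range r, ((n : ℚ) + 2 + j)) /
        (Nat.doubleFactorial (2 * r - 1) : ℚ)) :
    padicValInt 2 (u 1) = 1 ∧ padicValInt 2 (u 2) = 3 ∧ padicValInt 2 (u 3) = 4 ∧
    (∀ r : ℕ, 1 ≤ r → r ≤ n → (r + r / 2 : ℕ) ≤ padicValInt 2 (u r)) ∧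
    ¬ ∃ x : Fin n → ℤ,
      (X ^ n + ∑ r ∈ Finset.Icc 1 n, C ((-1) ^ r * u r) * X ^ (n - r) : Polynomial ℤ) =
        ∏ i : Fin n, (X - C (x i)) := by
  have hn2 : n + 1 = 2 ^ ℓ := by
    have : 1 ≤ 2 ^ ℓ := Nat.one_le_two_pow
    omega
  have hn3 : 3 ≤ n := by
    have : 2 ^ 2 ≤ 2 ^ ℓ := Nat.pow_le_pow_right (by norm_num) hℓ
    omega
  -- integer identity
  have hint : ∀ r, 1 ≤ r → r ≤ n →
      (u r).natAbs * Nat.doubleFactorial (2 * r - 1)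
        = 2 ^ r * n.choose r * ∏ j ∈ Finset.range r, (n + 2 + j) := by
    intro r h1 h2
    have hq := hu r h1 h2
    have hD : ((Nat.doubleFactorial (2 * r - 1) : ℚ)) ≠ 0 :=
      Nat.cast_ne_zero.mpr (Nat.doubleFactorial_pos _).ne'
    have h2' : (u r : ℚ) * (Nat.doubleFactorial (2 * r - 1) : ℚ)
        = 2 ^ r * (n.choose r : ℚ) * ∏ j ∈ Finset.range r, ((n : ℚ) + 2 + j) := by
      rw [hq]; field_simp
    have h4 : (u r) * (Nat.doubleFactorial (2 * r - 1) : ℤ)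
        = ((2 ^ r * n.choose r * ∏ j ∈ Finset.range r, (n + 2 + j) : ℕ) : ℤ) := by
      have : ((u r * (Nat.doubleFactorial (2 * r - 1) : ℤ) : ℤ) : ℚ)
          = (((2 ^ r * n.choose r * ∏ j ∈ Finset.range r, (n + 2 + j) : ℕ) : ℤ) : ℚ) := by
        push_cast
        rw [h2']
      exact_mod_cast this
    have h5 := congrArg Int.natAbs h4
    rwa [Int.natAbs_mul, Int.natAbs_natCast, Int.natAbs_natCast] at h5
  -- valuation of u r
  have hval : ∀ r, 1 ≤ r → r ≤ n →
      u r ≠ 0 ∧ padicValInt 2 (u r) = r + padicValNat 2 (Nat.factorial r) := by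
    intro r h1 h2
    have heq := hint r h1 h2
    have hP0 : ∀ j ∈ Finset.range r, n + 2 + j ≠ 0 := fun j _ => by omega
    have hProd0 : (∏ j ∈ Finset.range r, (n + 2 + j)) ≠ 0 := Finset.prod_ne_zero_iff.mpr hP0
    have hC0 : n.choose r ≠ 0 := (Nat.choose_pos h2).ne'
    have hRHS0 : 2 ^ r * n.choose r * ∏ j ∈ Finset.range r, (n + 2 + j) ≠ 0 :=
      mul_ne_zero (mul_ne_zero (pow_ne_zero _ two_ne_zero) hC0) hProd0
    have hu0 : (u r).natAbs ≠ 0 := by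
      intro h
      rw [h, zero_mul] at heq
      exact hRHS0 heq.symm
    have hDodd : ¬ 2 ∣ Nat.doubleFactorial (2 * r - 1) := by
      have h : 2 * r - 1 = 2 * (r - 1) + 1 := by omega
      rw [h]; exact aux_odd_dF (r - 1)
    have hD0 : Nat.doubleFactorial (2 * r - 1) ≠ 0 := (Nat.doubleFactorial_pos _).ne'
    -- factorial as sum of valuations
    have hfac : ∀ s : ℕ, padicValNat 2 (Nat.factorial s)
        = ∑ j ∈ Finset.range s, padicValNat 2 (j + 1) := by
      intro s
      rw [← Finset.prod_range_add_one_eq_factorial, aux_pv_prod]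
      intro j _; omega
    -- valuation of the ascending product
    have hPval : padicValNat 2 (∏ j ∈ Finset.range r, (n + 2 + j))
        = padicValNat 2 (Nat.factorial r) := by
      rw [aux_pv_prod _ _ hP0, hfac]
      refine Finset.sum_congr rfl fun j hj => ?_
      have hj' : j < r := Finset.mem_range.mp hj
      have h : n + 2 + j = 2 ^ ℓ + (j + 1) := by omega
      rw [h, aux_pv_two_pow_add (by omega) (by omega)]
    -- choose is odd
    have hCval : padicValNat 2 (n.choose r) = 0 := by
      have hdesc : Nat.descFactorial n r = ∏ i ∈ Finset.range r, (n - i) :=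
        Nat.descFactorial_eq_prod_range n r
      have hdesc2 : Nat.descFactorial n r = Nat.factorial r * n.choose r :=
        Nat.descFactorial_eq_factorial_mul_choose n r
      have hDF0 : ∀ i ∈ Finset.range r, n - i ≠ 0 := fun i hi => by
        have := Finset.mem_range.mp hi; omega
      have hv1 : padicValNat 2 (Nat.descFactorial n r) = padicValNat 2 (Nat.factorial r) := by
        rw [hdesc, aux_pv_prod _ _ hDF0, hfac]
        refine Finset.sum_congr rfl fun i hi => ?_
        have hi' : i < r := Finset.mem_range.mp hi
        have h : n - i = 2 ^ ℓ - (i + 1) := by omega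
        rw [h, aux_pv_two_pow_sub (by omega) (by omega)]
      have hv2 : padicValNat 2 (Nat.descFactorial n r)
          = padicValNat 2 (Nat.factorial r) + padicValNat 2 (n.choose r) := by
        rw [hdesc2, padicValNat.mul (Nat.factorial_ne_zero r) hC0]
      omega
    have lhs_val : padicValNat 2 ((u r).natAbs * Nat.doubleFactorial (2 * r - 1))
        = padicValNat 2 (u r).natAbs := by
      rw [padicValNat.mul hu0 hD0, padicValNat.eq_zero_of_not_dvd hDodd, add_zero]
    have rhs_val : padicValNat 2 (2 ^ r * n.choose r * ∏ j ∈ Finset.range r, (n + 2 + j))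
        = r + padicValNat 2 (Nat.factorial r) := by
      rw [padicValNat.mul (mul_ne_zero (pow_ne_zero _ two_ne_zero) hC0) hProd0,
        padicValNat.mul (pow_ne_zero _ two_ne_zero) hC0,
        padicValNat.prime_pow, hCval, add_zero, hPval]
    refine ⟨fun h => hu0 (by rw [h]; rfl), ?_⟩
    show padicValNat 2 (u r).natAbs = r + padicValNat 2 (Nat.factorial r)
    rw [← lhs_val, heq, rhs_val]
  have hval1 : padicValInt 2 (u 1) = 1 := by
    rw [(hval 1 (by omega) (by omega)).2]
    norm_num [Nat.factorial]
  have hval2 : padicValInt 2 (u 2) = 3 := by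
    rw [(hval 2 (by omega) (by omega)).2]
    have : Nat.factorial 2 = 2 := rfl
    rw [this, padicValNat.self (by norm_num)]
  have hval3 : padicValInt 2 (u 3) = 4 := by
    rw [(hval 3 (by omega) (by omega)).2]
    have h6 : Nat.factorial 3 = 2 * 3 := rfl
    rw [h6, padicValNat.mul two_ne_zero (by norm_num),
      padicValNat.self (by norm_num), padicValNat.eq_zero_of_not_dvd (by norm_num)]
  refine ⟨hval1, hval2, hval3, ?_, ?_⟩
  · intro r h1 h2
    rw [(hval r h1 h2).2]
    exact Nat.add_le_add_left (aux_half_le_pv_factorial r) r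
  rintro ⟨x, hx⟩
  classical
  have hcard : Multiset.card (Finset.univ.val.map x) = n := by simp
  have hcoeff : ∀ r, 1 ≤ r → r ≤ n →
      u r = ∑ t ∈ Finset.powersetCard r Finset.univ, ∏ i ∈ t, x i := by
    intro r h1 h2
    have hL : (X ^ n + ∑ s ∈ Finset.Icc 1 n, C ((-1) ^ s * u s) * X ^ (n - s) :
        Polynomial ℤ).coeff (n - r) = (-1) ^ r * u r := by
      rw [coeff_add, coeff_X_pow, if_neg (by omega), Polynomial.finset_sum_coeff,
        Finset.sum_eq_single r]
      · rw [coeff_C_mul, coeff_X_pow, if_pos rfl, mul_one, zero_add]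
      · intro s hs hne
        have hs' := Finset.mem_Icc.mp hs
        rw [coeff_C_mul, coeff_X_pow, if_neg (by omega), mul_zero]
      · intro h; exact absurd (Finset.mem_Icc.mpr ⟨h1, h2⟩) h
    have hR : (∏ i : Fin n, (X - C (x i)) : Polynomial ℤ).coeff (n - r)
        = (-1) ^ r * ∑ t ∈ Finset.powersetCard r Finset.univ, ∏ i ∈ t, x i := by
      have hprod : (∏ i : Fin n, (X - C (x i)) : Polynomial ℤ)
          = ((Finset.univ.val.map x).map fun t => X - C t).prod := by
        rw [Finset.prod_eq_multiset_prod, Multiset.map_map]; rfl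
      rw [hprod, Multiset.prod_X_sub_C_coeff _ (by simp), hcard]
      have h1' : n - (n - r) = r := by omega
      rw [h1', Finset.esymm_map_val]
    rw [hx, hR] at hL
    exact mul_left_cancel₀ (pow_ne_zero r (by norm_num : (-1:ℤ) ≠ 0)) hL.symm
  have hdvd_u : ∀ r, 1 ≤ r → r ≤ n → (2 : ℤ) ∣ u r := by
    intro r h1 h2
    obtain ⟨hne, hv⟩ := hval r h1 h2
    have h : ((2 : ℕ) : ℤ) ^ 1 ∣ u r :=
      (padicValInt_dvd_iff (p := 2) 1 (u r)).mpr (Or.inr (by omega))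
    simpa using h
  have hnotdvd : ∀ r, 1 ≤ r → r ≤ n → ∀ m, padicValInt 2 (u r) < m → ¬ (2 : ℤ) ^ m ∣ u r := by
    intro r h1 h2 m hm hdvd
    have hdvd' : ((2 : ℕ) : ℤ) ^ m ∣ u r := by exact_mod_cast hdvd
    rcases (padicValInt_dvd_iff (p := 2) m (u r)).mp hdvd' with h | h
    · exact (hval r h1 h2).1 h
    · omega
  have hroot2 : ∀ i : Fin n, (2 : ℤ) ∣ x i := by
    intro i
    have hev : eval (x i) (∏ j : Fin n, (X - C (x j))) = 0 := by
      rw [eval_prod]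
      exact Finset.prod_eq_zero (Finset.mem_univ i) (by simp)
    rw [← hx] at hev
    simp only [eval_add, eval_pow, eval_X, eval_finset_sum, eval_mul, eval_C] at hev
    have hxn : x i ^ n = -∑ r ∈ Finset.Icc 1 n, (-1) ^ r * u r * x i ^ (n - r) :=
      eq_neg_of_add_eq_zero_left hev
    have h2 : (2 : ℤ) ∣ x i ^ n := by
      rw [hxn]
      refine dvd_neg.mpr (Finset.dvd_sum fun r hr => ?_)
      have hr' := Finset.mem_Icc.mp hr
      exact ((hdvd_u r hr'.1 hr'.2).mul_left _).mul_right _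
    exact Int.prime_two.dvd_of_dvd_pow h2
  choose y hy using hroot2
  set T : Finset (Fin n) := Finset.univ.filter (fun i => ¬ (2 : ℤ) ∣ y i) with hTdef
  have hmemT : ∀ i : Fin n, i ∉ T → (2 : ℤ) ∣ y i := by
    intro i hi
    by_contra h
    exact hi (Finset.mem_filter.mpr ⟨Finset.mem_univ i, h⟩)
  have hmemT' : ∀ i ∈ T, ¬ (2 : ℤ) ∣ y i := fun i hi => (Finset.mem_filter.mp hi).2
  have hprod_split : ∀ t : Finset (Fin n), ∏ i ∈ t, x i = 2 ^ t.card * ∏ i ∈ t, y i := by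
    intro t
    calc ∏ i ∈ t, x i = ∏ i ∈ t, (2 * y i) := Finset.prod_congr rfl fun i _ => hy i
    _ = (∏ _i ∈ t, (2 : ℤ)) * ∏ i ∈ t, y i := Finset.prod_mul_distrib
    _ = 2 ^ t.card * ∏ i ∈ t, y i := by rw [Finset.prod_const]
  have hT1 : 1 ≤ T.card := by
    rw [Finset.one_le_card]
    by_contra hemp
    rw [Finset.not_nonempty_iff_eq_empty] at hemp
    have h4 : (2 : ℤ) ^ 2 ∣ u 1 := by
      rw [hcoeff 1 le_rfl (by omega)]
      refine Finset.dvd_sum fun t ht => ?_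
      obtain ⟨hts, htc⟩ := Finset.mem_powersetCard.mp ht
      obtain ⟨i, rfl⟩ := Finset.card_eq_one.mp htc
      rw [Finset.prod_singleton, hy i]
      obtain ⟨c, hc⟩ := hmemT i (by rw [hemp]; exact Finset.notMem_empty i)
      exact ⟨c, by rw [hc]; ring⟩
    exact hnotdvd 1 le_rfl (by omega) 2 (by rw [hval1]; omega) h4
  have hTn : T.card ≤ n := le_trans (Finset.card_filter_le _ _) (by simp)
  have hTle1 : T.card ≤ 1 := by
    by_contra hk
    push_neg at hk
    have hdvd : (2 : ℤ) ^ (T.card + 1) ∣ u T.card := by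
      obtain ⟨_, hv⟩ := hval T.card (by omega) hTn
      have hf : 1 ≤ padicValNat 2 (Nat.factorial T.card) :=
        le_trans (by omega) (aux_half_le_pv_factorial T.card)
      have h : ((2 : ℕ) : ℤ) ^ (T.card + 1) ∣ u T.card :=
        (padicValInt_dvd_iff (p := 2) (T.card + 1) (u T.card)).mpr (Or.inr (by omega))
      exact_mod_cast h
    rw [hcoeff T.card (by omega) hTn] at hdvd
    have hmem : T ∈ Finset.powersetCard T.card (Finset.univ : Finset (Fin n)) :=
      Finset.mem_powersetCard.mpr ⟨Finset.subset_univ T, rfl⟩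
    rw [← Finset.add_sum_erase _ _ hmem] at hdvd
    have hrest : (2 : ℤ) ^ (T.card + 1) ∣
        ∑ t ∈ (Finset.powersetCard T.card (Finset.univ : Finset (Fin n))).erase T,
          ∏ i ∈ t, x i := by
      refine Finset.dvd_sum fun t ht => ?_
      obtain ⟨hne, ht'⟩ := Finset.mem_erase.mp ht
      obtain ⟨hts, htc⟩ := Finset.mem_powersetCard.mp ht'
      have hnsub : ¬ t ⊆ T := fun hsub =>
        hne (Finset.eq_of_subset_of_card_le hsub (le_of_eq htc.symm))
      obtain ⟨i0, hi0t, hi0T⟩ := Finset.not_subset.mp hnsub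
      have h2y : (2 : ℤ) ∣ ∏ i ∈ t, y i :=
        dvd_trans (hmemT i0 hi0T) (Finset.dvd_prod_of_mem y hi0t)
      rw [hprod_split t, htc, pow_succ]
      exact mul_dvd_mul_left _ h2y
    have hTprod : (2 : ℤ) ^ (T.card + 1) ∣ ∏ i ∈ T, x i := by
      have := dvd_sub hdvd hrest
      simpa using this
    rw [hprod_split T, pow_succ] at hTprod
    obtain ⟨c, hc⟩ := hTprod
    have hyc : ∏ i ∈ T, y i = 2 * c := by
      apply mul_left_cancel₀ (pow_ne_zero T.card (two_ne_zero (α := ℤ)))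
      rw [hc]; ring
    have h2p : (2 : ℤ) ∣ ∏ i ∈ T, y i := ⟨c, hyc⟩
    obtain ⟨i, hiT, hi2⟩ := (Int.prime_two.dvd_finset_prod_iff y).mp h2p
    exact hmemT' i hiT hi2
  have h32 : (2 : ℤ) ^ 5 ∣ u 3 := by
    rw [hcoeff 3 (by omega) hn3]
    refine Finset.dvd_sum fun t ht => ?_
    obtain ⟨hts, htc⟩ := Finset.mem_powersetCard.mp ht
    have hcard2 : 2 ≤ (t \ T).card := by
      have := Finset.le_card_sdiff T t
      omega
    obtain ⟨a, ha, b, hb, hab⟩ := Finset.one_lt_card.mp (by omega : 1 < (t \ T).card)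
    have hya := hmemT a (Finset.mem_sdiff.mp ha).2
    have hyb := hmemT b (Finset.mem_sdiff.mp hb).2
    have hamem : a ∈ t := (Finset.mem_sdiff.mp ha).1
    have hbmem : b ∈ t.erase a :=
      Finset.mem_erase.mpr ⟨Ne.symm hab, (Finset.mem_sdiff.mp hb).1⟩
    have h4y : (4 : ℤ) ∣ ∏ i ∈ t, y i := by
      rw [← Finset.mul_prod_erase _ _ hamem, ← Finset.mul_prod_erase _ _ hbmem]
      obtain ⟨ca, hca⟩ := hya
      obtain ⟨cb, hcb⟩ := hyb
      exact ⟨ca * cb * ∏ i ∈ (t.erase a).erase b, y i, by rw [hca, hcb]; ring⟩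
    rw [hprod_split t, htc]
    calc (2 : ℤ) ^ 5 = 2 ^ 3 * 4 := by norm_num
    _ ∣ 2 ^ 3 * ∏ i ∈ t, y i := mul_dvd_mul_left _ h4y
  exact hnotdvd 3 (by omega) hn3 5 (by rw [hval3]; omega) h32
end
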